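/- arXiv:math/0507354 — 5 statements merged into one kernel-verified Lean document; each statement's English description precedes it below -/
import Mathlib

section
/- Let X be a Banach space with property (X). If F ∈ X** is Borel measurable as a scalar-valued function on X* equipped with the weak-* topology σ(X*, X), then F belongs to the canonical image of X in X**. -/
open NormedSpace
open Topology Filter Set
open Topology Filter Set

lemma exists_residual_continuousOn {γ : Type*} [TopologicalSpace γ] [MeasurableSpace γ]
    [BorelSpace γ] {f : γ → ℝ} (hf : Measurable f) :
    ∃ D ∈ residual γ, ContinuousOn f D := by
  obtain ⟨b, hbc, -, hb⟩ := TopologicalSpace.exists_countable_basis ℝ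
  have key : ∀ u ∈ b, ∃ V : Set γ, IsOpen V ∧ (f ⁻¹' u) =ᵇ V := fun u hu =>
    ((hf (hb.isOpen hu).measurableSet).baireMeasurableSet).residualEq_isOpen
  choose! V hVopen hVeq using key
  set D : Set γ := ⋂ u ∈ b, {x | (x ∈ f ⁻¹' u) = (x ∈ V u)} with hD
  have hDres : D ∈ residual γ := (countable_bInter_mem hbc).2 fun u hu => hVeq u hu
  refine ⟨D, hDres, fun x hx => ?_⟩
  have hxiff : ∀ u ∈ b, (x ∈ f ⁻¹' u) = (x ∈ V u) := by
    intro u hu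
    have := hx
    rw [hD, mem_iInter₂] at this
    exact this u hu
  rw [ContinuousWithinAt, (hb.nhds_hasBasis).tendsto_right_iff]
  rintro u ⟨hub, hfxu⟩
  have hxV : x ∈ V u := by rw [← hxiff u hub]; exact hfxu
  have hsub : V u ∩ D ⊆ f ⁻¹' u := by
    rintro y ⟨hyV, hyD⟩
    rw [hD, mem_iInter₂] at hyD
    have := hyD u hub
    simp only [mem_setOf_eq] at this
    rw [this]
    exact hyV
  filter_upwards [inter_mem (mem_nhdsWithin_of_mem_nhds ((hVopen u hub).mem_nhds hxV))
    self_mem_nhdsWithin] using fun y hy => hsub hy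
open Topology Filter Set

lemma cantor_key {k : (ℕ → Bool) → ℝ} {D : Set (ℕ → Bool)}
    (hk : ContinuousOn k D)
    (hinv : ∀ (ε δ : ℕ → Bool) (n : ℕ), (∀ j, δ j = true → ε j = false) →
      (∀ j, δ j = true → j < n) → k (fun j => ε j || δ j) = k ε)
    (α β : ℕ → Bool) (hα : α ∈ D)
    (h2 : ∀ n : ℕ, (fun j => α j && (decide (j < n) || β j)) ∈ D) :
    k α = k (fun j => α j && β j) := by
  set γ : ℕ → (ℕ → Bool) := fun n j => α j && (decide (j < n) || β j) with hγ
  have hconst : ∀ n, k (γ n) = k (fun j => α j && β j) := by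
    intro n
    have hrw : γ n = fun j => (α j && β j) || (α j && !β j && decide (j < n)) := by
      funext j
      simp only [hγ]
      cases α j <;> cases β j <;> simp
    rw [hrw]
    refine hinv _ _ n (fun j hj => ?_) (fun j hj => ?_)
    · revert hj; cases α j <;> cases β j <;> simp
    · simp only [Bool.and_eq_true, decide_eq_true_eq] at hj
      exact hj.2
  have htend : Tendsto γ atTop (𝓝 α) := by
    rw [tendsto_pi_nhds]
    intro j
    apply tendsto_const_nhds.congr'
    filter_upwards [eventually_ge_atTop (j + 1)] with n hn
    have hd : decide (j < n) = true := decide_eq_true (by omega)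
    simp [hγ, hd]
  have h3 : Tendsto (fun n => k (γ n)) atTop (𝓝 (k α)) :=
    (hk α hα).tendsto.comp
      (tendsto_nhdsWithin_of_tendsto_nhds_of_eventually_within _ htend
        (Eventually.of_forall h2))
  have h4 : Tendsto (fun n => k (γ n)) atTop (𝓝 (k (fun j => α j && β j))) := by
    simp_rw [hconst]
    exact tendsto_const_nhds
  exact tendsto_nhds_unique h3 h4
open Topology Filter Set

def CoordMap (f : ℕ → Bool → Bool → Bool) : (ℕ → Bool) × (ℕ → Bool) → (ℕ → Bool) :=
  fun p j => f j (p.1 j) (p.2 j)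

lemma coordMap_continuous (f : ℕ → Bool → Bool → Bool) : Continuous (CoordMap f) := by
  unfold CoordMap
  refine continuous_pi fun j => ?_
  have hc : Continuous (fun q : Bool × Bool => f j q.1 q.2) := continuous_of_discreteTopology
  have hp : Continuous (fun a : (ℕ → Bool) × (ℕ → Bool) => ((a.1 j, a.2 j) : Bool × Bool)) :=
    ((continuous_apply j).comp continuous_fst).prodMk ((continuous_apply j).comp continuous_snd)
  exact hc.comp hp

lemma coordMap_dense_preimage (f : ℕ → Bool → Bool → Bool)
    (hsurj : ∀ j c, ∃ a b, f j a b = c)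
    {t : Set (ℕ → Bool)} (htd : Dense t) :
    Dense (CoordMap f ⁻¹' t) := by
  rw [dense_iff_inter_open]
  rintro U hU ⟨⟨α, β⟩, hp⟩
  obtain ⟨U₁, U₂, hU₁, hU₂, hα, hβ, hsub⟩ := isOpen_prod_iff.1 hU α β hp
  obtain ⟨I₁, u₁, hu₁, hI₁⟩ := isOpen_pi_iff.1 hU₁ α hα
  obtain ⟨I₂, u₂, hu₂, hI₂⟩ := isOpen_pi_iff.1 hU₂ β hβ
  set γ0 : ℕ → Bool := fun j => f j (α j) (β j) with hγ0
  set n : Finset ℕ := I₁ ∪ I₂ with hn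
  have hWopen : IsOpen ((↑n : Set ℕ).pi fun j => ({γ0 j} : Set Bool)) :=
    isOpen_set_pi n.finite_toSet fun j _ => isOpen_discrete _
  have hγ0W : γ0 ∈ (↑n : Set ℕ).pi fun j => ({γ0 j} : Set Bool) := fun j _ => rfl
  obtain ⟨γ, hγW, hγt⟩ := htd.inter_open_nonempty _ hWopen ⟨γ0, hγ0W⟩
  choose A B hAB using fun j => hsurj j (γ j)
  set α' : ℕ → Bool := fun j => if j ∈ n then α j else A j with hα'
  set β' : ℕ → Bool := fun j => if j ∈ n then β j else B j with hβ'
  have hG : CoordMap f (α', β') = γ := by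
    funext j
    by_cases hj : j ∈ n
    · have : γ j = γ0 j := hγW j hj
      simp only [CoordMap, hα', hβ', if_pos hj, this, hγ0]
    · simp only [CoordMap, hα', hβ', if_neg hj, hAB j]
  refine ⟨(α', β'), ?_, show CoordMap f (α', β') ∈ t by rw [hG]; exact hγt⟩
  · apply hsub
    constructor
    · apply hI₁
      intro j hj
      have hjn : j ∈ n := Finset.mem_union_left _ hj
      simpa [hα', if_pos hjn] using (hu₁ j hj).2
    · apply hI₂
      intro j hj
      have hjn : j ∈ n := Finset.mem_union_right _ hj
      simpa [hβ', if_pos hjn] using (hu₂ j hj).2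

lemma coordMap_tendsto_residual (f : ℕ → Bool → Bool → Bool)
    (hsurj : ∀ j c, ∃ a b, f j a b = c) :
    Tendsto (CoordMap f) (residual ((ℕ → Bool) × (ℕ → Bool))) (residual (ℕ → Bool)) := by
  apply le_countableGenerate_iff_of_countableInterFilter.mpr
  rintro t ⟨ht, htd⟩
  exact residual_of_dense_open (ht.preimage (coordMap_continuous f))
    (coordMap_dense_preimage f hsurj htd)

/-- A Banach space `X` has property (X): for every `F` in the bidual not in the
canonical image of `X` there is a weakly unconditionally Cauchy series `∑ xⱼ*` in the
dual with weak-* sum `g` such that `∑ F(xⱼ*) ≠ F(g)`. -/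
def HasPropertyX (X : Type*) [NormedAddCommGroup X] [NormedSpace ℝ X] : Prop :=
  ∀ F : StrongDual ℝ (StrongDual ℝ X), F ∉ Set.range (inclusionInDoubleDual ℝ X) →
    ∃ (x : ℕ → StrongDual ℝ X) (g : StrongDual ℝ X),
      (∀ G : StrongDual ℝ (StrongDual ℝ X), Summable fun j => |G (x j)|) ∧
      (∀ v : X, HasSum (fun j => (x j) v) (g v)) ∧
      (∑' j, F (x j)) ≠ F g

/-- If `X` has property (X) and `F ∈ X**` is Borel measurable on `(X*, w*)`,
then `F` belongs to the canonical image of `X`. -/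
theorem hasPropertyX_borel_mem_range
    (X : Type*) [NormedAddCommGroup X] [NormedSpace ℝ X] [CompleteSpace X]
    (hX : HasPropertyX X)
    (F : StrongDual ℝ (StrongDual ℝ X))
    (hF : @Measurable (WeakDual ℝ X) ℝ (borel (WeakDual ℝ X)) Real.measurableSpace
      (fun f : WeakDual ℝ X => F (WeakDual.toStrongDual f))) :
    F ∈ Set.range (inclusionInDoubleDual ℝ X) := by
  by_contra hFX
  obtain ⟨x, g, hwuC, hg, hne⟩ := hX F hFX
  -- summability of the evaluations
  have hsumv : ∀ v : X, Summable fun j => |x j v| := fun v => by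
    simpa only [NormedSpace.dual_def] using hwuC (inclusionInDoubleDual ℝ X v)
  have hS : ∀ (ε : ℕ → Bool) (v : X), Summable fun j => (if ε j then x j v else 0) := by
    intro ε v
    apply Summable.of_abs
    refine Summable.of_nonneg_of_le (fun j => abs_nonneg _) (fun j => ?_) (hsumv v)
    by_cases hj : ε j = true
    · rw [if_pos hj]
    · rw [if_neg hj, abs_zero]
      exact abs_nonneg _
  -- partial sums
  set s : (ℕ → Bool) → ℕ → StrongDual ℝ X :=
    fun ε n => ∑ j ∈ Finset.range n, if ε j then x j else 0 with hs
  have hsap : ∀ ε n v, s ε n v = ∑ j ∈ Finset.range n, (if ε j then x j v else 0) := by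
    intro ε n v
    rw [hs]
    simp only [ContinuousLinearMap.coe_sum', Finset.sum_apply]
    congr 1
    funext j
    rw [apply_ite (fun f : StrongDual ℝ X => f v)]
    simp
  have hts : ∀ ε : ℕ → Bool, Tendsto (fun n v => s ε n v) atTop
      (𝓝 fun v => ∑' j, if ε j then x j v else 0) := by
    intro ε
    rw [tendsto_pi_nhds]
    intro v
    have := (hS ε v).hasSum.tendsto_sum_nat
    simp only [hsap]
    exact this
  set φ : (ℕ → Bool) → StrongDual ℝ X := fun ε => continuousLinearMapOfTendsto (s ε) (hts ε) with hφ
  have hφap : ∀ ε v, φ ε v = ∑' j, if ε j then x j v else 0 := fun ε v => rfl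
  -- continuity into the weak dual
  have hψc : Continuous fun ε : ℕ → Bool => StrongDual.toWeakDual (φ ε) := by
    apply WeakDual.continuous_of_continuous_eval
    intro v
    have heq : (fun ε : ℕ → Bool => StrongDual.toWeakDual (φ ε) v)
        = fun ε : ℕ → Bool => ∑' j, if ε j then x j v else 0 := by
      funext ε
      exact hφap ε v
    rw [heq]
    refine continuous_tsum (fun j => ?_) (hsumv v) (fun j ε => ?_)
    · have hc : Continuous (fun t : Bool => if t then x j v else 0) :=
        continuous_of_discreteTopology
      exact hc.comp (continuous_apply j)
    · by_cases hj : ε j = true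
      · rw [if_pos hj, Real.norm_eq_abs]
      · rw [if_neg hj, norm_zero]
        exact abs_nonneg _
  -- measurability of h
  have hψm : @Measurable (ℕ → Bool) (WeakDual ℝ X) _ (borel _)
      (fun ε => StrongDual.toWeakDual (φ ε)) := by
    exact @Continuous.measurable _ _ _ _ _ _ (borel (WeakDual ℝ X))
      (@BorelSpace.mk _ _ (borel (WeakDual ℝ X)) rfl) _ hψc
  have hhm : Measurable fun ε : ℕ → Bool => F (φ ε) := by
    have := hF.comp hψm
    exact this
  -- the function B
  have hBsum : ∀ ε : ℕ → Bool, Summable fun j => (if ε j then F (x j) else 0) := by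
    intro ε
    apply Summable.of_abs
    refine Summable.of_nonneg_of_le (fun j => abs_nonneg _) (fun j => ?_) (hwuC F)
    by_cases hj : ε j = true
    · rw [if_pos hj]
    · rw [if_neg hj, abs_zero]
      exact abs_nonneg _
  set B : (ℕ → Bool) → ℝ := fun ε => ∑' j, if ε j then F (x j) else 0 with hB
  have hBc : Continuous B := by
    rw [hB]
    refine continuous_tsum (fun j => ?_) (hwuC F) (fun j ε => ?_)
    · have hc : Continuous (fun t : Bool => if t then F (x j) else 0) :=
        continuous_of_discreteTopology
      exact hc.comp (continuous_apply j)
    · by_cases hj : ε j = true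
      · rw [if_pos hj, Real.norm_eq_abs]
      · rw [if_neg hj, norm_zero]
        exact abs_nonneg _
  set k : (ℕ → Bool) → ℝ := fun ε => F (φ ε) - B ε with hk
  have hkm : Measurable k := hhm.sub hBc.measurable
  -- additivity for disjoint supports
  have hφadd : ∀ ε δ : ℕ → Bool, (∀ j, δ j = true → ε j = false) →
      φ (fun j => ε j || δ j) = φ ε + φ δ := by
    intro ε δ hdisj
    ext v
    rw [ContinuousLinearMap.add_apply, hφap, hφap, hφap, ← Summable.tsum_add (hS ε v) (hS δ v)]
    refine tsum_congr fun j => ?_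
    cases hδ : δ j
    · simp [hδ]
    · have hε := hdisj j hδ
      simp [hδ, hε]
  have hBadd : ∀ ε δ : ℕ → Bool, (∀ j, δ j = true → ε j = false) →
      B (fun j => ε j || δ j) = B ε + B δ := by
    intro ε δ hdisj
    rw [hB]
    simp only
    rw [← Summable.tsum_add (hBsum ε) (hBsum δ)]
    refine tsum_congr fun j => ?_
    by_cases hδ : δ j = true
    · have hε := hdisj j hδ
      simp [hδ, hε]
    · simp [hδ]
  -- complement identity
  have hφcompl : ∀ ε : ℕ → Bool, φ ε + φ (fun j => !ε j) = g := by
    intro ε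
    ext v
    rw [ContinuousLinearMap.add_apply, hφap, hφap, ← Summable.tsum_add (hS ε v) (hS (fun j => !ε j) v)]
    have : ∀ j, (if ε j then x j v else 0) + (if !ε j then x j v else 0) = x j v := by
      intro j
      cases hε : ε j <;> simp [hε]
    calc (∑' j, ((if ε j then x j v else 0) + (if (fun j => !ε j) j then x j v else 0)))
        = ∑' j, x j v := tsum_congr fun j => this j
      _ = g v := (hg v).tsum_eq
  -- finite support values
  have hfin : ∀ (ε : ℕ → Bool) (n : ℕ), (∀ j, ε j = true → j < n) → F (φ ε) = B ε := by
    intro ε n hn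
    have hnot : ∀ j, j ∉ Finset.range n → ¬(ε j = true) := by
      intro j hj hεj
      exact hj (Finset.mem_range.2 (hn j hεj))
    have hφeq : φ ε = s ε n := by
      ext v
      rw [hφap, hsap]
      exact tsum_eq_sum fun j hj => if_neg (hnot j hj)
    have hBeq : B ε = ∑ j ∈ Finset.range n, (if ε j then F (x j) else 0) := by
      rw [hB]
      exact tsum_eq_sum fun j hj => if_neg (hnot j hj)
    rw [hφeq, hBeq, hs]
    simp only
    rw [map_sum]
    refine Finset.sum_congr rfl fun j _ => ?_
    rw [apply_ite F, map_zero]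
  -- invariance of k under adding a finitely supported disjoint perturbation
  have hinv : ∀ (ε δ : ℕ → Bool) (n : ℕ), (∀ j, δ j = true → ε j = false) →
      (∀ j, δ j = true → j < n) → k (fun j => ε j || δ j) = k ε := by
    intro ε δ n hdisj hbd
    have hδd : ∀ j, δ j = true → ε j = false := hdisj
    rw [hk]
    simp only
    rw [hφadd ε δ hdisj, map_add, hBadd ε δ hdisj, hfin δ n hbd]
    ring
  -- splitting identity
  have hsplit : ∀ α β : ℕ → Bool,
      k α = k (fun j => α j && β j) + k (fun j => α j && !β j) := by
    intro α β
    have hα : α = fun j => (α j && β j) || (α j && !β j) := by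
      funext j
      cases α j <;> cases β j <;> rfl
    have hdisj : ∀ j, (α j && !β j) = true → (α j && β j) = false := by
      intro j hj
      revert hj
      cases α j <;> cases β j <;> simp
    have h1 : F (φ α) = F (φ fun j => α j && β j) + F (φ fun j => α j && !β j) := by
      rw [← map_add, ← hφadd _ _ hdisj, ← hα]
    have h2 : B α = B (fun j => α j && β j) + B (fun j => α j && !β j) := by
      rw [← hBadd _ _ hdisj, ← hα]
    rw [hk]
    simp only
    rw [h1, h2]
    ring
  obtain ⟨D, hD, hkD⟩ := exists_residual_continuousOn hkm
  -- the residual set of good pairs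
  set f1 : ℕ → Bool → Bool → Bool := fun _ a _ => a with hf1
  set f2 : ℕ → ℕ → Bool → Bool → Bool := fun n j a b => a && (decide (j < n) || b) with hf2
  set f3 : ℕ → ℕ → Bool → Bool → Bool := fun n j a b => a && (decide (j < n) || !b) with hf3
  set f4 : ℕ → Bool → Bool → Bool := fun _ a _ => !a with hf4
  set f5 : ℕ → ℕ → Bool → Bool → Bool := fun n j a b => !a && (decide (j < n) || b) with hf5
  set f6 : ℕ → ℕ → Bool → Bool → Bool := fun n j a b => !a && (decide (j < n) || !b) with hf6
  have hs1 : ∀ j c, ∃ a b, f1 j a b = c := fun j c => ⟨c, c, rfl⟩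
  have hs4 : ∀ j c, ∃ a b, f4 j a b = c := fun j c => ⟨!c, c, by cases c <;> rfl⟩
  have hs2 : ∀ n j c, ∃ a b, f2 n j a b = c := by
    intro n j c
    cases c
    · exact ⟨false, false, rfl⟩
    · exact ⟨true, true, by simp [hf2]⟩
  have hs3 : ∀ n j c, ∃ a b, f3 n j a b = c := by
    intro n j c
    cases c
    · exact ⟨false, false, rfl⟩
    · exact ⟨true, false, by simp [hf3]⟩
  have hs5 : ∀ n j c, ∃ a b, f5 n j a b = c := by
    intro n j c
    cases c
    · exact ⟨true, false, rfl⟩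
    · exact ⟨false, true, by simp [hf5]⟩
  have hs6 : ∀ n j c, ∃ a b, f6 n j a b = c := by
    intro n j c
    cases c
    · exact ⟨true, false, rfl⟩
    · exact ⟨false, false, by simp [hf6]⟩
  set E : Set ((ℕ → Bool) × (ℕ → Bool)) :=
    (CoordMap f1 ⁻¹' D) ∩ (⋂ n, CoordMap (f2 n) ⁻¹' D) ∩ (⋂ n, CoordMap (f3 n) ⁻¹' D) ∩
    (CoordMap f4 ⁻¹' D) ∩ (⋂ n, CoordMap (f5 n) ⁻¹' D) ∩ (⋂ n, CoordMap (f6 n) ⁻¹' D) with hE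
  have hEres : E ∈ residual ((ℕ → Bool) × (ℕ → Bool)) := by
    rw [hE]
    refine inter_mem (inter_mem (inter_mem (inter_mem (inter_mem ?_ ?_) ?_) ?_) ?_) ?_
    · exact coordMap_tendsto_residual f1 hs1 hD
    · exact (countable_iInter_mem).2 fun n => coordMap_tendsto_residual (f2 n) (hs2 n) hD
    · exact (countable_iInter_mem).2 fun n => coordMap_tendsto_residual (f3 n) (hs3 n) hD
    · exact coordMap_tendsto_residual f4 hs4 hD
    · exact (countable_iInter_mem).2 fun n => coordMap_tendsto_residual (f5 n) (hs5 n) hD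
    · exact (countable_iInter_mem).2 fun n => coordMap_tendsto_residual (f6 n) (hs6 n) hD
  obtain ⟨⟨α, β⟩, hmem⟩ := (dense_of_mem_residual hEres).nonempty
  rw [hE] at hmem
  obtain ⟨⟨⟨⟨⟨hm1, hm2⟩, hm3⟩, hm4⟩, hm5⟩, hm6⟩ := hmem
  have hαD : α ∈ D := hm1
  have hcαD : (fun j => !α j) ∈ D := hm4
  have hm2' : ∀ n : ℕ, (fun j => α j && (decide (j < n) || β j)) ∈ D := fun n =>
    mem_iInter.1 hm2 n
  have hm3' : ∀ n : ℕ, (fun j => α j && (decide (j < n) || !β j)) ∈ D := fun n =>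
    mem_iInter.1 hm3 n
  have hm5' : ∀ n : ℕ, (fun j => !α j && (decide (j < n) || β j)) ∈ D := fun n =>
    mem_iInter.1 hm5 n
  have hm6' : ∀ n : ℕ, (fun j => !α j && (decide (j < n) || !β j)) ∈ D := fun n =>
    mem_iInter.1 hm6 n
  have hkα : k α = 0 := by
    have e1 := cantor_key hkD hinv α β hαD hm2'
    have e2 := cantor_key hkD hinv α (fun j => !β j) hαD hm3'
    have e3 := hsplit α β
    linarith
  have hkcα : k (fun j => !α j) = 0 := by
    have e1 := cantor_key hkD hinv (fun j => !α j) β hcαD hm5'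
    have e2 := cantor_key hkD hinv (fun j => !α j) (fun j => !β j) hcαD hm6'
    have e3 := hsplit (fun j => !α j) β
    linarith
  -- final contradiction
  have hhsum : F (φ α) + F (φ fun j => !α j) = F g := by
    rw [← map_add, hφcompl α]
  have hBtot : B α + B (fun j => !α j) = ∑' j, F (x j) := by
    rw [hB]
    simp only
    rw [← Summable.tsum_add (hBsum α) (hBsum fun j => !α j)]
    refine tsum_congr fun j => ?_
    by_cases hα : α j = true <;> simp [hα]
  apply hne
  have := hkα
  have := hkcα
  rw [hk] at hkα hkcα
  simp only at hkα hkcα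
  have : F (φ α) + F (φ fun j => !α j) - (B α + B (fun j => !α j)) = 0 := by linarith
  rw [hhsum, hBtot] at this
  linarith
end

section
/- Property (X) is hereditary: if a Banach space X has property (X), then every closed linear subspace of X has property (X). -/
open NormedSpace

/-- Property (X) is hereditary: it passes to closed subspaces. -/
theorem hasPropertyX_hereditary
    (X : Type*) [NormedAddCommGroup X] [NormedSpace ℝ X] [CompleteSpace X]
    (hX : HasPropertyX X)
    (S : Submodule ℝ X) (hS : IsClosed (S : Set X)) :
    HasPropertyX S := by
  intro F hF
  -- restriction map `r : X* → S*`
  set r : StrongDual ℝ X →L[ℝ] StrongDual ℝ S :=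
    (ContinuousLinearMap.compL ℝ S X ℝ).flip (Submodule.subtypeL S) with hrdef
  have hr : ∀ (f : StrongDual ℝ X) (v : S), r f v = f v := fun f v => rfl
  set G : StrongDual ℝ (StrongDual ℝ X) := F.comp r with hGdef
  have hGr : ∀ f : StrongDual ℝ X, G f = F (r f) := fun f => rfl
  by_cases hGm : G ∈ Set.range (inclusionInDoubleDual ℝ X)
  · -- impossible: then F would itself be in the image of S
    exfalso
    obtain ⟨x, hx⟩ := hGm
    have hGx : ∀ f : StrongDual ℝ X, G f = f x := by
      intro f; rw [← hx]; rfl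
    have hxS : x ∈ S := by
      by_contra hxS
      obtain ⟨f, u, hfx, hfb⟩ :=
        geometric_hahn_banach_point_closed (S.convex) hS hxS
      -- f vanishes on S
      have hf0 : ∀ v : X, v ∈ S → f v = 0 := by
        intro v hv
        by_contra hne
        have key : ∀ t : ℝ, u < t * f v := by
          intro t
          have := hfb (t • v) (S.smul_mem t hv)
          simpa using this
        rcases lt_trichotomy (f v) 0 with h | h | h
        · have := key ((u - 1) / f v)
          rw [div_mul_cancel₀ _ (ne_of_lt h)] at this
          linarith
        · exact hne h
        · have := key ((u - 1) / f v)
          rw [div_mul_cancel₀ _ (ne_of_gt h)] at this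
          linarith
      -- so r f = 0, hence f x = G f = 0
      have hrf : r f = 0 := by
        ext v
        simpa [hr] using hf0 v v.2
      have : f x = 0 := by
        rw [← hGx f, hGr, hrf]; simp
      -- but f x < u < f 0 = 0
      have h0 : u < f 0 := hfb 0 (S.zero_mem)
      rw [map_zero] at h0
      linarith
    apply hF
    refine ⟨⟨x, hxS⟩, ?_⟩
    ext φ
    obtain ⟨f, hfext, -⟩ := exists_extension_norm_eq S φ
    have hrfφ : r f = φ := by
      ext v
      rw [hr]
      exact hfext v
    have : F φ = G f := by rw [hGr, hrfφ]
    rw [dual_def, this, hGx]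
    exact (hfext ⟨x, hxS⟩).symm
  · obtain ⟨x, g, h1, h2, h3⟩ := hX G hGm
    refine ⟨fun j => r (x j), r g, ?_, ?_, ?_⟩
    · intro G'
      exact h1 (G'.comp r)
    · intro v
      have := h2 (v : X)
      simpa [hr] using this
    · exact h3
end

section
/- Quantitative form of the main theorem: let X be a separable L-embedded Banach space with L-projection P on X** whose range is the canonical image of X, let F ∈ X** not lie in the canonical image of X, and let 0 < ε < 1. Then there exists a weakly unconditionally Cauchy series ∑ x_j* in X* with ‖∑* x_j*‖ ≤ 1 such that F(∑* x_j*) − ∑_j F(x_j*) > (1 − ε) ‖F − P F‖ > 0. -/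
open NormedSpace

set_option maxHeartbeats 400000 in
lemma exists_norming_point {Y : Type*} [NormedAddCommGroup Y] [NormedSpace ℝ Y]
    (g : StrongDual ℝ Y) {γ R : ℝ} (hγ0 : 0 < γ) (hγ1 : γ < 1) (hR : 0 < R) :
    ∃ w : Y, ‖w‖ < R ∧ γ^2 * (R * ‖g‖) ≤ g w := by
  by_cases hg : g = 0
  · exact ⟨0, by simpa using hR, by simp [hg]⟩
  · have hgn : 0 < ‖g‖ := norm_pos_iff.2 hg
    have hex : ∃ w : Y, γ * ‖g‖ * ‖w‖ < |g w| := by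
      by_contra hb
      push_neg at hb
      have h7 : ‖g‖ ≤ γ * ‖g‖ :=
        ContinuousLinearMap.opNorm_le_bound g (by positivity)
          (fun w => by rw [Real.norm_eq_abs]; exact hb w)
      nlinarith
    obtain ⟨w, hw⟩ := hex
    have hw0 : w ≠ 0 := by
      rintro rfl; simp at hw
    have hwn : 0 < ‖w‖ := norm_pos_iff.2 hw0
    set sgn : ℝ := if 0 ≤ g w then 1 else -1 with hsgn
    have habs : sgn * g w = |g w| := by
      rcases le_or_gt 0 (g w) with h | h
      · rw [hsgn, if_pos h, one_mul, abs_of_nonneg h]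
      · rw [hsgn, if_neg (not_le.2 h), abs_of_neg h]; ring
    refine ⟨(γ * R * sgn / ‖w‖) • w, ?_, ?_⟩
    · rw [norm_smul, Real.norm_eq_abs]
      have hs1 : |γ * R * sgn / ‖w‖| = γ * R / ‖w‖ := by
        rcases le_or_gt 0 (g w) with h | h
        · rw [hsgn, if_pos h, mul_one, abs_of_pos (by positivity)]
        · rw [hsgn, if_neg (not_le.2 h), abs_div, abs_of_pos hwn,
            show γ * R * (-1) = -(γ*R) by ring, abs_neg, abs_of_pos (by positivity)]
      rw [hs1, div_mul_cancel₀ _ (ne_of_gt hwn)]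
      nlinarith
    · rw [map_smul, smul_eq_mul]
      have e : γ * R * sgn / ‖w‖ * g w = (γ * R / ‖w‖) * (sgn * g w) := by ring
      rw [e, habs]
      have h8 : γ * ‖g‖ * ‖w‖ ≤ |g w| := le_of_lt hw
      have h9 : 0 < γ * R / ‖w‖ := by positivity
      calc γ^2*(R*‖g‖) = (γ * R / ‖w‖) * (γ * ‖g‖ * ‖w‖) := by field_simp
        _ ≤ (γ * R / ‖w‖) * |g w| := mul_le_mul_of_nonneg_left h8 (le_of_lt h9)

lemma sign_choice (γ η ck : ℝ) (hγ0 : 0 < γ) (hγ1 : γ < 1) (hη : 0 < η) :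
    |γ * η * (if 0 ≤ ck then (1:ℝ) else -1)| < η ∧
      γ^2 * (η * |ck|) ≤ (γ * η * (if 0 ≤ ck then (1:ℝ) else -1)) * ck := by
  have hγγ : γ^2 ≤ γ := by nlinarith
  constructor
  · have habs : |γ * η * (if 0 ≤ ck then (1:ℝ) else -1)| = γ * η := by
      rcases le_or_gt 0 ck with h | h
      · rw [if_pos h, mul_one, abs_of_pos (by positivity)]
      · rw [if_neg (not_le.2 h), show γ * η * (-1) = -(γ*η) by ring, abs_neg,
          abs_of_pos (by positivity)]
    rw [habs]; nlinarith
  · have he : (γ * η * (if 0 ≤ ck then (1:ℝ) else -1)) * ck = γ * η * |ck| := by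
      rcases le_or_gt 0 ck with h | h
      · rw [if_pos h, mul_one, abs_of_nonneg h]
      · rw [if_neg (not_le.2 h), abs_of_neg h]; ring
    rw [he]
    have h1 : 0 ≤ η * |ck| := by positivity
    calc γ^2 * (η * |ck|) ≤ γ * (η * |ck|) := mul_le_mul_of_nonneg_right hγγ h1
      _ = γ * η * |ck| := by ring

set_option maxHeartbeats 1000000 in
lemma approx_lemma {Y : Type*} [NormedAddCommGroup Y] [NormedSpace ℝ Y]
    {ι κ : Type*} [Fintype ι] [DecidableEq ι] [Fintype κ] [DecidableEq κ]
    (a : ι → Y) (r : ℝ) (T : κ → StrongDual ℝ Y) (Φ : StrongDual ℝ (StrongDual ℝ Y))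
    (hΦ : ∀ i, ‖Φ - inclusionInDoubleDual ℝ Y (a i)‖ ≤ r)
    {η : ℝ} (hη : 0 < η) (hrη : 0 < r + η) :
    ∃ y : Y, (∀ k, |T k y - Φ (T k)| < η) ∧ ∀ i, ‖y - a i‖ < r + η := by
  by_contra hcon
  push_neg at hcon
  -- Work in the product space Z
  set Z := ((ι → Y) × (κ → ℝ)) with hZ
  set zmap : Y → Z := fun y => ((fun i => y - a i), (fun k => T k y - Φ (T k))) with hzmap
  set O : Set Z := {z | (∀ i, ‖z.1 i‖ < r + η) ∧ (∀ k, |z.2 k| < η)} with hO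
  set D : Set Z := Set.range zmap with hD
  have hOopen : IsOpen O := by
    have h1 : O = (⋂ i, {z : Z | ‖z.1 i‖ < r + η}) ∩ (⋂ k, {z : Z | |z.2 k| < η}) := by
      ext z; simp [hO, Set.mem_iInter]
    rw [h1]
    refine IsOpen.inter (isOpen_iInter_of_finite fun i => ?_)
      (isOpen_iInter_of_finite fun k => ?_)
    · have : {z : Z | ‖z.1 i‖ < r + η} = (fun z : Z => z.1 i) ⁻¹' Metric.ball 0 (r + η) := by
        ext z; simp [Metric.mem_ball, dist_zero_right]
      rw [this]
      exact Metric.isOpen_ball.preimage ((continuous_apply i).comp continuous_fst)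
    · have : {z : Z | |z.2 k| < η} = (fun z : Z => z.2 k) ⁻¹' Metric.ball 0 η := by
        ext z; simp [Metric.mem_ball, dist_zero_right, Real.norm_eq_abs]
      rw [this]
      exact Metric.isOpen_ball.preimage ((continuous_apply k).comp continuous_snd)
  have hOconv : Convex ℝ O := by
    have h1 : O = (⋂ i, {z : Z | ‖z.1 i‖ < r + η}) ∩ (⋂ k, {z : Z | |z.2 k| < η}) := by
      ext z; simp [hO, Set.mem_iInter]
    rw [h1]
    refine Convex.inter (convex_iInter fun i => ?_) (convex_iInter fun k => ?_)
    · have : {z : Z | ‖z.1 i‖ < r + η} = (fun z : Z => z.1 i) ⁻¹' Metric.ball 0 (r + η) := by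
        ext z; simp [Metric.mem_ball, dist_zero_right]
      rw [this]
      exact (convex_ball (0:Y) (r+η)).linear_preimage
        ((LinearMap.proj i).comp (LinearMap.fst ℝ (ι → Y) (κ → ℝ)))
    · have : {z : Z | |z.2 k| < η} = (fun z : Z => z.2 k) ⁻¹' Metric.ball 0 η := by
        ext z; simp [Metric.mem_ball, dist_zero_right, Real.norm_eq_abs]
      rw [this]
      exact (convex_ball (0:ℝ) η).linear_preimage
        ((LinearMap.proj k).comp (LinearMap.snd ℝ (ι → Y) (κ → ℝ)))
  have hDconv : Convex ℝ D := by
    rintro z₁ ⟨y₁, rfl⟩ z₂ ⟨y₂, rfl⟩ s t hs ht hst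
    refine ⟨s • y₁ + t • y₂, ?_⟩
    simp only [hzmap]
    refine Prod.ext (funext fun i => ?_) (funext fun k => ?_)
    · show s • y₁ + t • y₂ - a i = s • (y₁ - a i) + t • (y₂ - a i)
      have h2 : s • (y₁ - a i) + t • (y₂ - a i) = (s • y₁ + t • y₂) - (s+t) • a i := by
        module
      rw [h2, hst, one_smul]
    · show T k (s • y₁ + t • y₂) - Φ (T k)
        = s • (T k y₁ - Φ (T k)) + t • (T k y₂ - Φ (T k))
      have hTk : (T k) (s • y₁ + t • y₂) = s * T k y₁ + t * T k y₂ := by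
        simp [map_add, map_smul]
      rw [hTk]
      simp only [smul_eq_mul]
      linear_combination (Φ (T k)) * hst
  have hdisj : Disjoint O D := by
    rw [Set.disjoint_left]
    rintro z hzO ⟨y, rfl⟩
    obtain ⟨i, hi⟩ := hcon y (fun k => hzO.2 k)
    exact absurd (hzO.1 i) (not_lt.2 hi)
  obtain ⟨f, u, hfO, hfD⟩ := geometric_hahn_banach_open hOconv hOopen hDconv hdisj
  have hu0 : 0 < u := by
    have h0O : (0 : Z) ∈ O := by
      constructor
      · intro i; simpa using hrη
      · intro k; simpa using hη
    simpa using hfO 0 h0O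
  -- decompose f into components
  set sing : ι → (Y →L[ℝ] (ι → Y)) := fun i =>
    ContinuousLinearMap.pi (fun j => if j = i then ContinuousLinearMap.id ℝ Y else 0) with hsing
  have hsing_apply : ∀ i (y : Y), sing i y = Pi.single i y := by
    intro i y; funext j
    simp only [hsing, ContinuousLinearMap.pi_apply, Pi.single_apply]
    by_cases h : j = i <;> simp [h]
  set inL : (ι → Y) →L[ℝ] Z := ContinuousLinearMap.inl ℝ _ _ with hinL
  set μ : ι → StrongDual ℝ Y := fun i => f.comp (inL.comp (sing i)) with hμ
  set c : κ → ℝ := fun k => f ((0 : ι → Y), Pi.single k (1:ℝ)) with hc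
  have hdec : ∀ z : Z, f z = (∑ i, μ i (z.1 i)) + ∑ k, z.2 k * c k := by
    intro z
    have hz : z = ((z.1, 0) : Z) + ((0, z.2) : Z) := by
      refine Prod.ext ?_ ?_ <;> simp
    nth_rewrite 1 [hz]
    rw [map_add]
    congr 1
    · have h1 : ((z.1, 0) : Z) = ∑ i, inL (sing i (z.1 i)) := by
        have e : ∀ i : ι, inL (sing i (z.1 i)) = ((Pi.single i (z.1 i), 0) : Z) := by
          intro i; rw [hsing_apply]; rfl
        rw [Finset.sum_congr rfl (fun i _ => e i)]
        refine Prod.ext ?_ ?_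
        · rw [Prod.fst_sum]
          simp only
          exact (Finset.univ_sum_single z.1).symm
        · rw [Prod.snd_sum]
          simp
      rw [h1, map_sum]
      exact Finset.sum_congr rfl fun i _ => by simp [hμ]
    · have h2 : ((0, z.2) : Z) = ∑ k, z.2 k • (((0 : ι → Y), Pi.single k (1:ℝ)) : Z) := by
        refine Prod.ext ?_ ?_
        · rw [Prod.fst_sum]; simp
        · rw [Prod.snd_sum]
          simp only [Prod.smul_snd]
          rw [← Finset.univ_sum_single z.2]
          exact Finset.sum_congr rfl fun k _ => by
            funext j
            simp [Pi.single_apply, mul_ite]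
      rw [h2, map_sum]
      exact Finset.sum_congr rfl fun k _ => by rw [map_smul]; simp [hc, smul_eq_mul]
  -- lower bound on the affine image
  have hDlow : ∀ y : Y, u ≤ (∑ i, μ i (y - a i)) + ∑ k, (T k y - Φ (T k)) * c k := by
    intro y
    have h2 := hfD (zmap y) ⟨y, rfl⟩
    rw [hdec (zmap y)] at h2
    simpa [hzmap] using h2
  -- the linear part vanishes
  have hL0 : ∀ y : Y, (∑ i, μ i y) + ∑ k, T k y * c k = 0 := by
    have hlin : ∀ y : Y,
        u + ((∑ i, μ i (a i)) + ∑ k, Φ (T k) * c k)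
          ≤ (∑ i, μ i y) + ∑ k, T k y * c k := by
      intro y
      have h1 := hDlow y
      have e1 : ∑ i, μ i (y - a i) = (∑ i, μ i y) - ∑ i, μ i (a i) := by
        rw [← Finset.sum_sub_distrib]
        exact Finset.sum_congr rfl fun i _ => by simp [map_sub]
      have e2 : ∑ k, (T k y - Φ (T k)) * c k
          = (∑ k, T k y * c k) - ∑ k, Φ (T k) * c k := by
        rw [← Finset.sum_sub_distrib]
        exact Finset.sum_congr rfl fun k _ => by ring
      rw [e1, e2] at h1
      linarith
    intro y
    by_contra hy
    have hsm : ∀ t : ℝ, (∑ i, μ i (t • y)) + ∑ k, T k (t • y) * c k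
        = t * ((∑ i, μ i y) + ∑ k, T k y * c k) := by
      intro t
      rw [mul_add, Finset.mul_sum, Finset.mul_sum]
      congr 1
      · exact Finset.sum_congr rfl fun i _ => by simp [map_smul, smul_eq_mul]
      · exact Finset.sum_congr rfl fun k _ => by simp [map_smul, smul_eq_mul]; ring
    set L := (∑ i, μ i y) + ∑ k, T k y * c k with hLdef
    set Cst := (∑ i, μ i (a i)) + ∑ k, Φ (T k) * c k with hCst
    have h3 := hlin (((u + Cst - 1) / L) • y)
    rw [hsm] at h3
    rw [div_mul_cancel₀ _ hy] at h3
    linarith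
  -- apply Φ to the vanishing functional
  have hΦΛ : (∑ i, Φ (μ i)) + ∑ k, c k * Φ (T k) = 0 := by
    have hΛ : ((∑ i, μ i) + ∑ k, c k • T k) = (0 : StrongDual ℝ Y) := by
      ext y
      have := hL0 y
      simpa [ContinuousLinearMap.sum_apply, smul_eq_mul, mul_comm] using this
    have h4 := congrArg Φ hΛ
    simpa [map_sum, smul_eq_mul] using h4
  -- upper bound for u
  have hupper : u ≤ ∑ i, r * ‖μ i‖ := by
    have h1 := hDlow 0
    have e1 : ∑ i, μ i ((0:Y) - a i) = - ∑ i, μ i (a i) := by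
      rw [← Finset.sum_neg_distrib]
      exact Finset.sum_congr rfl fun i _ => by simp
    have e2 : ∑ k, (T k (0:Y) - Φ (T k)) * c k = - ∑ k, c k * Φ (T k) := by
      rw [← Finset.sum_neg_distrib]
      exact Finset.sum_congr rfl fun k _ => by simp; ring
    rw [e1, e2] at h1
    have h5 : u ≤ ∑ i, (Φ (μ i) - μ i (a i)) := by
      rw [Finset.sum_sub_distrib]
      linarith
    refine h5.trans (Finset.sum_le_sum fun i _ => ?_)
    have h6 : Φ (μ i) - μ i (a i) = (Φ - inclusionInDoubleDual ℝ Y (a i)) (μ i) := by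
      simp [NormedSpace.dual_def]
    rw [h6]
    calc (Φ - inclusionInDoubleDual ℝ Y (a i)) (μ i)
        ≤ ‖(Φ - inclusionInDoubleDual ℝ Y (a i)) (μ i)‖ := le_abs_self _
      _ ≤ ‖Φ - inclusionInDoubleDual ℝ Y (a i)‖ * ‖μ i‖ :=
          ContinuousLinearMap.le_opNorm _ _
      _ ≤ r * ‖μ i‖ := mul_le_mul_of_nonneg_right (hΦ i) (norm_nonneg _)
  -- lower bound for u via the open set
  set A := ((∑ i, (r+η)*‖μ i‖) + ∑ k, η*|c k|) with hA
  have hAu : A ≤ u := by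
    by_contra hAc
    push_neg at hAc
    have hApos : 0 < A := lt_trans hu0 hAc
    have huA1 : u / A < 1 := (div_lt_one hApos).2 hAc
    have huA0 : 0 < u / A := div_pos hu0 hApos
    set γ := Real.sqrt ((u/A + 1)/2) with hγdef
    have hγ2 : γ^2 = (u/A+1)/2 := Real.sq_sqrt (by linarith)
    have hγ0 : 0 < γ := Real.sqrt_pos.2 (by linarith)
    have hγ1 : γ < 1 := by nlinarith [hγ2, hγ0]
    -- choose good points in the balls
    have hyi : ∀ i, ∃ w : Y, ‖w‖ < r + η ∧ γ^2*((r+η)*‖μ i‖) ≤ μ i w :=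
      fun i => exists_norming_point (μ i) hγ0 hγ1 hrη
    choose yi hyi1 hyi2 using hyi
    set tk : κ → ℝ := fun k => γ * η * (if 0 ≤ c k then 1 else -1) with htk
    have htk1 : ∀ k, |tk k| < η := fun k => (sign_choice γ η (c k) hγ0 hγ1 hη).1
    have htk2 : ∀ k, γ^2 * (η * |c k|) ≤ tk k * c k :=
      fun k => (sign_choice γ η (c k) hγ0 hγ1 hη).2
    have hzO : ((yi, tk) : Z) ∈ O := ⟨fun i => hyi1 i, fun k => htk1 k⟩
    have hflt := hfO _ hzO
    rw [hdec ((yi, tk) : Z)] at hflt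
    have hge : γ^2 * A ≤ (∑ i, μ i (yi i)) + ∑ k, tk k * c k := by
      rw [hA, mul_add, Finset.mul_sum, Finset.mul_sum]
      refine add_le_add (Finset.sum_le_sum fun i _ => ?_)
        (Finset.sum_le_sum fun k _ => ?_)
      · exact hyi2 i
      · exact htk2 k
    have hlt : γ^2 * A < u := lt_of_le_of_lt hge hflt
    have hgam : γ^2 * A = (u + A)/2 := by
      rw [hγ2]; field_simp
    rw [hgam] at hlt
    linarith
  -- conclusion: everything vanishes, contradiction
  have hfinal : (∑ i, ‖μ i‖) + ∑ k, |c k| ≤ 0 := by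
    have e3 : A = (∑ i, r * ‖μ i‖) + ((∑ i, η * ‖μ i‖) + ∑ k, η * |c k|) := by
      rw [hA]
      rw [Finset.sum_congr rfl
        (fun (i : ι) _ => (show (r + η) * ‖μ i‖ = r * ‖μ i‖ + η * ‖μ i‖ by ring)),
        Finset.sum_add_distrib]
      ring
    have h10 : A ≤ ∑ i, r * ‖μ i‖ := hAu.trans hupper
    rw [e3] at h10
    have h11 : η * ((∑ i, ‖μ i‖) + ∑ k, |c k|) ≤ η * 0 := by
      rw [mul_add, Finset.mul_sum, Finset.mul_sum, mul_zero]
      linarith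
    exact le_of_mul_le_mul_left h11 hη
  have hμ0 : ∀ i, μ i = (0 : StrongDual ℝ Y) := by
    intro i
    have h11 : (∑ i, ‖μ i‖) ≤ 0 := by
      have : (0:ℝ) ≤ ∑ k, |c k| := Finset.sum_nonneg fun k _ => abs_nonneg _
      linarith
    have h12 : ‖μ i‖ ≤ 0 := by
      have := Finset.single_le_sum (f := fun i => ‖μ i‖)
        (fun i _ => norm_nonneg _) (Finset.mem_univ i)
      linarith
    exact norm_le_zero_iff.1 h12
  have hc0 : ∀ k, c k = 0 := by
    intro k
    have h11 : (∑ k, |c k|) ≤ 0 := by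
      have : (0:ℝ) ≤ ∑ i, ‖μ i‖ := Finset.sum_nonneg fun i _ => norm_nonneg _
      linarith
    have h12 : |c k| ≤ 0 := by
      have := Finset.single_le_sum (f := fun k => |c k|)
        (fun k _ => abs_nonneg _) (Finset.mem_univ k)
      linarith
    exact abs_nonpos_iff.1 h12
  have hf0 : ∀ z : Z, f z = 0 := by
    intro z
    rw [hdec z]
    simp [hμ0, hc0]
  have := hfD (zmap 0) ⟨0, rfl⟩
  rw [hf0] at this
  linarith


/-- The double dual of a normed space, with its instances taken from the norm. -/
abbrev DD (E : Type*) [SeminormedAddCommGroup E] [NormedSpace ℝ E] :=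
  StrongDual ℝ (StrongDual ℝ E)

section Aux
variable {X : Type*} [NormedAddCommGroup X] [NormedSpace ℝ X]

/-- The key M-type bound coming from the L-projection identity. -/
lemma M_bound (P : StrongDual ℝ (StrongDual ℝ X) →L[ℝ] StrongDual ℝ (StrongDual ℝ X))
    (hL : ∀ Λ, ‖P Λ‖ + ‖Λ - P Λ‖ = ‖Λ‖) (h a : StrongDual ℝ X) :
    ‖@id (DD (StrongDual ℝ X)) ((inclusionInDoubleDual ℝ (StrongDual ℝ X) h).comp P) - inclusionInDoubleDual ℝ (StrongDual ℝ X) a‖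
      ≤ max ‖h - a‖ ‖a‖ := by
  refine ContinuousLinearMap.opNorm_le_bound _ (le_max_iff.2 (Or.inl (norm_nonneg _))) ?_
  intro Λ
  have e : (@id (DD (StrongDual ℝ X)) ((inclusionInDoubleDual ℝ (StrongDual ℝ X) h).comp P)
      - inclusionInDoubleDual ℝ (StrongDual ℝ X) a) Λ = (P Λ) (h - a) + (Λ - P Λ) (-a) := by
    simp only [id, ContinuousLinearMap.sub_apply, ContinuousLinearMap.comp_apply,
      NormedSpace.dual_def, map_sub, map_neg]
    ring
  rw [e, Real.norm_eq_abs]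
  have b1 : |(P Λ) (h - a)| ≤ ‖P Λ‖ * ‖h - a‖ := by
    rw [← Real.norm_eq_abs]; exact ContinuousLinearMap.le_opNorm _ _
  have b2 : |(Λ - P Λ) (-a)| ≤ ‖Λ - P Λ‖ * ‖a‖ := by
    rw [← Real.norm_eq_abs]
    calc ‖(Λ - P Λ) (-a)‖ ≤ ‖Λ - P Λ‖ * ‖-a‖ := ContinuousLinearMap.le_opNorm _ _
      _ = ‖Λ - P Λ‖ * ‖a‖ := by rw [norm_neg]
  have hmax1 : ‖h - a‖ ≤ max ‖h - a‖ ‖a‖ := le_max_left _ _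
  have hmax2 : ‖a‖ ≤ max ‖h - a‖ ‖a‖ := le_max_right _ _
  have hP1 : (0:ℝ) ≤ ‖P Λ‖ := norm_nonneg (P Λ)
  have hP2 : (0:ℝ) ≤ ‖Λ - P Λ‖ := norm_nonneg _
  calc |(P Λ) (h - a) + (Λ - P Λ) (-a)| ≤ |(P Λ) (h - a)| + |(Λ - P Λ) (-a)| := abs_add_le _ _
    _ ≤ ‖P Λ‖ * ‖h - a‖ + ‖Λ - P Λ‖ * ‖a‖ := add_le_add b1 b2
    _ ≤ ‖P Λ‖ * max ‖h - a‖ ‖a‖ + ‖Λ - P Λ‖ * max ‖h - a‖ ‖a‖ :=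
        add_le_add (mul_le_mul_of_nonneg_left hmax1 hP1) (mul_le_mul_of_nonneg_left hmax2 hP2)
    _ = max ‖h - a‖ ‖a‖ * (‖P Λ‖ + ‖Λ - P Λ‖) := by ring
    _ = max ‖h - a‖ ‖a‖ * ‖Λ‖ := by rw [hL]

/-- The inductive invariant. -/
def LInv (G : StrongDual ℝ (StrongDual ℝ X)) (lam : StrongDual ℝ X) (v : ℕ → X) (c3 : ℝ)
    (n : ℕ) (xs : Fin n → StrongDual ℝ X) : Prop :=
  (∀ σ : Fin n → ℝ, (∀ i, σ i = 1 ∨ σ i = -1) → ∀ s : ℝ, (s = 1 ∨ s = -1) →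
     ‖(∑ i, σ i • xs i) + s • (lam - ∑ i, xs i)‖ ≤ 2 - (2⁻¹:ℝ)^n)
  ∧ (∀ i : Fin n, |G (xs i)| ≤ c3 / 2 / 2^(i.1))
  ∧ (∀ i : Fin n, |(lam - ∑ j, xs j) (v i.1)| ≤ (2⁻¹:ℝ)^n)

lemma LInv_base (G : StrongDual ℝ (StrongDual ℝ X)) (lam : StrongDual ℝ X) (hlam : ‖lam‖ ≤ 1)
    (v : ℕ → X) (c3 : ℝ) : LInv G lam v c3 0 (fun i => i.elim0) := by
  refine ⟨?_, fun i => i.elim0, fun i => i.elim0⟩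
  intro σ hσ s hs
  have e : (∑ i : Fin 0, σ i • (fun i : Fin 0 => (i.elim0 : StrongDual ℝ X)) i)
      + s • (lam - ∑ i : Fin 0, (fun i : Fin 0 => (i.elim0 : StrongDual ℝ X)) i) = s • lam := by
    simp
  rw [e, norm_smul, Real.norm_eq_abs]
  have : |s| = 1 := by rcases hs with rfl | rfl <;> norm_num
  rw [this, one_mul]
  have : ((2:ℝ) - (2⁻¹:ℝ)^0) = 1 := by norm_num
  rw [this]
  exact hlam

end Aux

section Step
variable {X : Type*} [NormedAddCommGroup X] [NormedSpace ℝ X]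

set_option maxHeartbeats 1000000 in
lemma LInv_step (P : StrongDual ℝ (StrongDual ℝ X) →L[ℝ] StrongDual ℝ (StrongDual ℝ X))
    (hL : ∀ Λ, ‖P Λ‖ + ‖Λ - P Λ‖ = ‖Λ‖)
    (hPJ : ∀ w : X, P (inclusionInDoubleDual ℝ X w) = inclusionInDoubleDual ℝ X w)
    (G : StrongDual ℝ (StrongDual ℝ X)) (hPG : P G = 0)
    (lam : StrongDual ℝ X) (v : ℕ → X) (c3 : ℝ) (hc3 : 0 < c3)
    (n : ℕ) (xs : Fin n → StrongDual ℝ X) (hinv : LInv G lam v c3 n xs) :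
    ∃ xh, LInv G lam v c3 (n+1) (Fin.snoc xs xh) := by
  classical
  obtain ⟨h1, h2, h3⟩ := hinv
  set h : StrongDual ℝ X := lam - ∑ i, xs i with hh
  set Φ : DD (StrongDual ℝ X) := (inclusionInDoubleDual ℝ (StrongDual ℝ X) h).comp P with hPhi
  have hΦJ : ∀ w : X, Φ (inclusionInDoubleDual ℝ X w) = h w := by
    intro w
    rw [hPhi]
    show (inclusionInDoubleDual ℝ (StrongDual ℝ X) h) (P (inclusionInDoubleDual ℝ X w)) = h w
    rw [hPJ w, NormedSpace.dual_def, NormedSpace.dual_def]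
  have hΦG : Φ G = 0 := by
    rw [hPhi]
    show (inclusionInDoubleDual ℝ (StrongDual ℝ X) h) (P G) = 0
    rw [hPG]
    simp
  set sg : Bool → ℝ := fun b => if b then 1 else -1 with hsg
  have hsgval : ∀ b, sg b = 1 ∨ sg b = -1 := fun b => by cases b <;> simp [hsg]
  set U : ((Fin n → Bool) × Bool) → StrongDual ℝ X := fun p => ∑ i, sg (p.1 i) • xs i with hU
  set ctr : ((Fin n → Bool) × Bool) → StrongDual ℝ X :=
    fun p => (2⁻¹:ℝ) • (h - sg p.2 • U p) with hctr
  have hUh : ∀ (p : (Fin n → Bool) × Bool) (s : ℝ), (s = 1 ∨ s = -1) →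
      ‖U p + s • h‖ ≤ 2 - (2⁻¹:ℝ)^n := by
    intro p s hs
    exact h1 (fun i => sg (p.1 i)) (fun i => hsgval _) s hs
  -- ball hypotheses for the approximation lemma
  have hball : ∀ p, ‖Φ - inclusionInDoubleDual ℝ (StrongDual ℝ X) (ctr p)‖
      ≤ (2 - (2⁻¹:ℝ)^n)/2 := by
    intro p
    refine le_trans (M_bound P hL h (ctr p)) (max_le ?_ ?_)
    · -- ‖h - ctr p‖ ≤ (2 - 2⁻¹^n)/2
      have e1 : h - ctr p = (2⁻¹ * sg p.2) • (U p + sg p.2 • h) := by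
        show h - (2⁻¹:ℝ) • (h - sg p.2 • U p) = (2⁻¹ * sg p.2) • (U p + sg p.2 • h)
        rcases hsgval p.2 with hb | hb <;> rw [hb] <;> module
      rw [e1, norm_smul, Real.norm_eq_abs]
      have e5 : |(2⁻¹ * sg p.2)| = 2⁻¹ := by
        rcases hsgval p.2 with hb | hb <;> rw [hb] <;> norm_num
      rw [e5]
      have hb := hUh p (sg p.2) (hsgval p.2)
      linarith
    · -- ‖ctr p‖ ≤ (2 - 2⁻¹^n)/2
      have e2 : ctr p = (2⁻¹ * (-(sg p.2))) • (U p + (-(sg p.2)) • h) := by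
        show (2⁻¹:ℝ) • (h - sg p.2 • U p) = (2⁻¹ * (-(sg p.2))) • (U p + (-(sg p.2)) • h)
        rcases hsgval p.2 with hb | hb <;> rw [hb] <;> module
      rw [e2, norm_smul, Real.norm_eq_abs]
      have e5 : |(2⁻¹ * (-(sg p.2)))| = 2⁻¹ := by
        rcases hsgval p.2 with hb | hb <;> rw [hb] <;> norm_num
      rw [e5]
      have hb := hUh p (-(sg p.2)) (by rcases hsgval p.2 with hb | hb <;> rw [hb] <;> norm_num)
      linarith
  set ηs : ℝ := min ((2⁻¹:ℝ)^(n+2)) (min ((2⁻¹:ℝ)^(n+1)) (c3 / 2 / 2^n)) with hηs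
  have hηs0 : 0 < ηs := by
    rw [hηs]
    refine lt_min (by positivity) (lt_min (by positivity) (by positivity))
  have hq : (0:ℝ) < (2⁻¹:ℝ)^n := by positivity
  have hqsucc : ((2⁻¹:ℝ)^(n+1)) = (2⁻¹:ℝ)^n * 2⁻¹ := pow_succ _ _
  have hqsucc2 : ((2⁻¹:ℝ)^(n+2)) = (2⁻¹:ℝ)^(n+1) * 2⁻¹ := pow_succ _ _
  have hr0 : (0:ℝ) < (2 - (2⁻¹:ℝ)^n)/2 + ηs := by
    have : (2⁻¹:ℝ)^n ≤ 1 := by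
      refine pow_le_one₀ (by norm_num) (by norm_num)
    nlinarith
  set TT : (Fin (n+1) ⊕ Unit) → StrongDual ℝ (StrongDual ℝ X) :=
    Sum.elim (fun i => inclusionInDoubleDual ℝ X (v i.1)) (fun _ => G) with hTT
  obtain ⟨xh, hx1, hx2⟩ := approx_lemma ctr ((2 - (2⁻¹:ℝ)^n)/2) TT Φ hball hηs0 hr0
  have hxval : ∀ i : Fin (n+1), |xh (v i.1) - h (v i.1)| < ηs := by
    intro i
    have h5 := hx1 (Sum.inl i)
    have e : TT (Sum.inl i) xh = xh (v i.1) := by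
      rw [hTT]; exact NormedSpace.dual_def ℝ X (v i.1) xh
    have e2 : Φ (TT (Sum.inl i)) = h (v i.1) := by
      rw [hTT]; exact hΦJ (v i.1)
    rw [e, e2] at h5
    exact h5
  have hxG : |G xh| < ηs := by
    have h5 := hx1 (Sum.inr ())
    have e : TT (Sum.inr ()) xh = G xh := by rw [hTT]; rfl
    have e2 : Φ (TT (Sum.inr ())) = 0 := by rw [hTT]; exact hΦG
    rw [e, e2, sub_zero] at h5
    exact h5
  have hsum2 : (∑ j : Fin (n+1), Fin.snoc xs xh j) = (∑ j : Fin n, xs j) + xh := by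
    rw [Fin.sum_univ_castSucc]
    congr 1
    · exact Finset.sum_congr rfl fun i _ => by rw [Fin.snoc_castSucc]
    · rw [Fin.snoc_last]
  have htail : lam - ∑ j : Fin (n+1), Fin.snoc xs xh j = h - xh := by
    rw [hsum2, hh]; abel
  refine ⟨xh, ?_, ?_, ?_⟩
  · -- the sign-sum estimates
    intro σ hσ s hs
    have hsum1 : (∑ i : Fin (n+1), σ i • Fin.snoc xs xh i)
        = (∑ i : Fin n, σ i.castSucc • xs i) + σ (Fin.last n) • xh := by
      rw [Fin.sum_univ_castSucc]
      congr 1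
      · exact Finset.sum_congr rfl fun i _ => by rw [Fin.snoc_castSucc]
      · rw [Fin.snoc_last]
    set U' : StrongDual ℝ X := ∑ i : Fin n, σ i.castSucc • xs i with hU'
    have hgoal_eq : (∑ i : Fin (n+1), σ i • Fin.snoc xs xh i)
        + s • (lam - ∑ i : Fin (n+1), Fin.snoc xs xh i)
        = U' + σ (Fin.last n) • xh + s • (h - xh) := by
      rw [hsum1, htail]
    rw [hgoal_eq]
    have hmono : (2:ℝ) - (2⁻¹:ℝ)^n ≤ 2 - (2⁻¹:ℝ)^(n+1) := by
      have : (2⁻¹:ℝ)^(n+1) ≤ (2⁻¹:ℝ)^n := by rw [hqsucc]; nlinarith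
      linarith
    -- boolean encoding of σ on the first n coordinates
    set pb : Fin n → Bool := fun i => decide (σ i.castSucc = 1) with hpb
    have hsgpb : ∀ i : Fin n, sg (pb i) = σ i.castSucc := by
      intro i
      rcases hσ i.castSucc with hc | hc
      · have hp : pb i = true := by rw [hpb]; exact decide_eq_true hc
        rw [hp, show sg true = (1:ℝ) from by simp [hsg], hc]
      · have hp : pb i = false := by
          rw [hpb]; exact decide_eq_false (by rw [hc]; norm_num)
        rw [hp, show sg false = (-1:ℝ) from by simp [hsg], hc]
    have hUU : ∀ b, U (pb, b) = U' := by
      intro b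
      show (∑ i, sg (pb i) • xs i) = U'
      exact Finset.sum_congr rfl fun i _ => by rw [hsgpb i]
    have hcb : ∀ b, ctr (pb, b) = (2⁻¹:ℝ) • (h - sg b • U') := by
      intro b
      show (2⁻¹:ℝ) • (h - sg b • U (pb, b)) = _
      rw [hUU b]
    have hx2' : ∀ b, ‖xh - ctr (pb, b)‖ < (2 - (2⁻¹:ℝ)^n)/2 + ηs := fun b => hx2 (pb, b)
    have hηb : ηs ≤ (2⁻¹:ℝ)^(n+2) := min_le_left _ _
    rcases hσ (Fin.last n) with hlast | hlast <;> rcases hs with rfl | rfl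
    · -- σ last = 1, s = 1
      have e : U' + σ (Fin.last n) • xh + (1:ℝ) • (h - xh) = U' + (1:ℝ) • h := by
        rw [hlast]; module
      rw [e]
      exact le_trans (h1 (fun i => σ i.castSucc) (fun i => hσ _) 1 (Or.inl rfl)) hmono
    · -- σ last = 1, s = -1 : opposite signs
      have e : U' + σ (Fin.last n) • xh + (-1:ℝ) • (h - xh)
          = (2:ℝ) • (xh - ctr (pb, true)) := by
        rw [hlast, hcb true, show sg true = (1:ℝ) from by simp [hsg]]; module
      rw [e, norm_smul, Real.norm_eq_abs, show |(2:ℝ)| = 2 by norm_num]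
      have hb := hx2' true
      linarith [hqsucc, hqsucc2]
    · -- σ last = -1, s = 1 : opposite signs
      have e : U' + σ (Fin.last n) • xh + (1:ℝ) • (h - xh)
          = (-2:ℝ) • (xh - ctr (pb, false)) := by
        rw [hlast, hcb false, show sg false = (-1:ℝ) from by simp [hsg]]; module
      rw [e, norm_smul, Real.norm_eq_abs, show |(-2:ℝ)| = 2 by norm_num]
      have hb := hx2' false
      linarith [hqsucc, hqsucc2]
    · -- σ last = -1, s = -1
      have e : U' + σ (Fin.last n) • xh + (-1:ℝ) • (h - xh) = U' + (-1:ℝ) • h := by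
        rw [hlast]; module
      rw [e]
      exact le_trans (h1 (fun i => σ i.castSucc) (fun i => hσ _) (-1) (Or.inr rfl)) hmono
  · -- G-values
    intro i
    refine Fin.lastCases ?_ (fun j => ?_) i
    · rw [Fin.snoc_last]
      have hη2 : ηs ≤ c3 / 2 / 2^n := le_trans (min_le_right _ _) (min_le_right _ _)
      have h9 : ((Fin.last n) : ℕ) = n := rfl
      rw [h9]
      exact le_of_lt (lt_of_lt_of_le hxG hη2)
    · rw [Fin.snoc_castSucc]
      have h9 : ((j.castSucc) : ℕ) = (j : ℕ) := rfl
      rw [h9]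
      exact h2 j
  · -- values on the dense sequence
    intro i
    rw [htail]
    have hηz : ηs ≤ (2⁻¹:ℝ)^(n+1) := le_trans (min_le_right _ _) (min_le_left _ _)
    have h5 : |(h - xh) (v i.1)| < ηs := by
      rw [ContinuousLinearMap.sub_apply, abs_sub_comm]
      exact hxval i
    linarith


end Step

set_option maxHeartbeats 1000000 in
/-- Quantitative form of the main theorem: for a separable L-embedded Banach space
`X` with L-projection `P`, any `F ∈ X** \ X` and any `0 < ε < 1` there is a weakly
unconditionally Cauchy series `∑ xⱼ*` in `X*` whose weak-* sum `g` has norm at most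
one, with `F(g) - ∑ F(xⱼ*) > (1 - ε) ‖F - P F‖ > 0`. -/
theorem separable_LEmbedded_quantitative
    (X : Type*) [NormedAddCommGroup X] [NormedSpace ℝ X] [CompleteSpace X]
    [TopologicalSpace.SeparableSpace X]
    (P : StrongDual ℝ (StrongDual ℝ X) →L[ℝ] StrongDual ℝ (StrongDual ℝ X))
    (hproj : ∀ F, P (P F) = P F)
    (hrange : Set.range P = Set.range (inclusionInDoubleDual ℝ X))
    (hL : ∀ F : StrongDual ℝ (StrongDual ℝ X), ‖P F‖ + ‖F - P F‖ = ‖F‖)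
    (F : StrongDual ℝ (StrongDual ℝ X)) (hF : F ∉ Set.range (inclusionInDoubleDual ℝ X))
    (ε : ℝ) (hε0 : 0 < ε) (hε1 : ε < 1) :
    ∃ (x : ℕ → StrongDual ℝ X) (g : StrongDual ℝ X),
      (∀ G : StrongDual ℝ (StrongDual ℝ X), Summable fun j => |G (x j)|) ∧
      (∀ v : X, HasSum (fun j => (x j) v) (g v)) ∧
      ‖g‖ ≤ 1 ∧
      F g - ∑' j, F (x j) > (1 - ε) * ‖F - P F‖ ∧
      (1 - ε) * ‖F - P F‖ > 0 := by
  classical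
  set G : StrongDual ℝ (StrongDual ℝ X) := F - P F with hG
  have hPJ : ∀ w : X, P (inclusionInDoubleDual ℝ X w) = inclusionInDoubleDual ℝ X w := by
    intro w
    have : inclusionInDoubleDual ℝ X w ∈ Set.range P := by
      rw [hrange]; exact ⟨w, rfl⟩
    obtain ⟨Λ, hΛ⟩ := this
    rw [← hΛ, hproj]
  have hPG : P G = 0 := by
    rw [hG, map_sub P, hproj, sub_self]
  have hd0 : 0 < ‖G‖ := by
    rcases (norm_nonneg G).eq_or_lt with h0 | h0
    · exfalso
      have hG0 : G = 0 := (norm_eq_zero (a := G)).1 h0.symm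
      apply hF
      rw [← hrange]
      refine ⟨F, ?_⟩
      have h1 : P F = F := (sub_eq_zero.1 hG0).symm
      rw [h1]
    · exact h0
  set d : ℝ := ‖G‖ with hd
  -- dense sequence
  obtain ⟨v, hv⟩ := TopologicalSpace.exists_dense_seq X
  -- a nearly norming functional for G
  have hlamex : ∃ lam : StrongDual ℝ X, ‖lam‖ ≤ 1 ∧ (1 - ε/2) * d < G lam := by
    by_contra hcon
    push_neg at hcon
    have hb0 : (0:ℝ) ≤ (1 - ε/2) * d := by nlinarith
    have hbound : ‖G‖ ≤ (1 - ε/2) * d := by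
      refine ContinuousLinearMap.opNorm_le_bound _ hb0 ?_
      intro φ
      rcases eq_or_ne φ 0 with rfl | hφ0
      · simp
      · have hφn : 0 < ‖φ‖ := norm_pos_iff.2 hφ0
        have h1 : ∀ ψ : StrongDual ℝ X, ‖ψ‖ ≤ 1 → G ψ ≤ (1 - ε/2) * d := hcon
        have h2 : G ((‖φ‖⁻¹) • φ) ≤ (1 - ε/2) * d := by
          refine h1 _ ?_
          rw [norm_smul, Real.norm_eq_abs, abs_of_pos (by positivity),
            inv_mul_cancel₀ (ne_of_gt hφn)]
        have h3 : G (-((‖φ‖⁻¹) • φ)) ≤ (1 - ε/2) * d := by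
          refine h1 _ ?_
          rw [norm_neg, norm_smul, Real.norm_eq_abs, abs_of_pos (by positivity),
            inv_mul_cancel₀ (ne_of_gt hφn)]
        rw [map_neg] at h3
        have h4 : |G ((‖φ‖⁻¹) • φ)| ≤ (1 - ε/2) * d := abs_le.2 ⟨by linarith, h2⟩
        rw [map_smul, smul_eq_mul, abs_mul, abs_of_pos (by positivity)] at h4
        rw [Real.norm_eq_abs]
        calc |G φ| = ‖φ‖ * (‖φ‖⁻¹ * |G φ|) := by
              field_simp
          _ ≤ ‖φ‖ * ((1 - ε/2) * d) := by
              refine mul_le_mul_of_nonneg_left ?_ (norm_nonneg _)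
              exact h4
          _ = (1 - ε/2) * d * ‖φ‖ := by ring
    rw [← hd] at hbound
    nlinarith
  obtain ⟨lam, hlam1, hlam2⟩ := hlamex
  set c3 : ℝ := ε * d / 8 with hc3def
  have hc3 : 0 < c3 := by rw [hc3def]; positivity
  -- the recursive construction
  choose step hstepP using
    (fun n xs hinv => LInv_step P hL hPJ G hPG lam v c3 hc3 n xs hinv)
  obtain ⟨cc, hcc⟩ : ∃ cc : ∀ n, {xs : Fin n → StrongDual ℝ X // LInv G lam v c3 n xs},
      ∀ n, (cc (n+1)).1 = Fin.snoc (cc n).1 (step n (cc n).1 (cc n).2) :=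
    ⟨fun n => Nat.rec ⟨fun i => i.elim0, LInv_base G lam hlam1 v c3⟩
      (fun n ih => ⟨Fin.snoc ih.1 (step n ih.1 ih.2), hstepP n ih.1 ih.2⟩) n,
     fun n => rfl⟩
  set x : ℕ → StrongDual ℝ X := fun j => (cc (j+1)).1 (Fin.last j) with hxdef
  have hcoh : ∀ n (i : Fin n), (cc n).1 i = x i.1 := by
    intro n
    induction n with
    | zero => exact fun i => i.elim0
    | succ n ih =>
      intro i
      refine Fin.lastCases ?_ (fun j => ?_) i
      · rfl
      · rw [hcc n, Fin.snoc_castSucc, ih j]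
        have : ((j.castSucc) : ℕ) = (j : ℕ) := rfl
        rw [this]
  have hInv : ∀ n, LInv G lam v c3 n (fun i : Fin n => x i.1) := by
    intro n
    have h0 := (cc n).2
    have hfe : (cc n).1 = (fun i : Fin n => x i.1) := funext (hcoh n)
    rwa [hfe] at h0
  -- uniform bound on signed partial sums
  have hsign : ∀ n (σ : Fin n → ℝ), (∀ i, σ i = 1 ∨ σ i = -1) →
      ‖∑ i : Fin n, σ i • x i.1‖ ≤ 2 := by
    intro n σ hσ
    obtain ⟨h1, -, -⟩ := hInv n
    have hp := h1 σ hσ 1 (Or.inl rfl)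
    have hm := h1 σ hσ (-1) (Or.inr rfl)
    have hq : (0:ℝ) < (2⁻¹:ℝ)^n := by positivity
    set U := ∑ i : Fin n, σ i • x i.1 with hUdef
    set hh := lam - ∑ i : Fin n, x i.1 with hhdef
    have e : U = (2⁻¹:ℝ) • ((U + (1:ℝ) • hh) + (U + (-1:ℝ) • hh)) := by module
    rw [e, norm_smul, Real.norm_eq_abs, show |(2⁻¹:ℝ)| = 2⁻¹ by norm_num]
    have hb : ‖(U + (1:ℝ) • hh) + (U + (-1:ℝ) • hh)‖
        ≤ ‖U + (1:ℝ) • hh‖ + ‖U + (-1:ℝ) • hh‖ := norm_add_le _ _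
    linarith
  have htail_norm : ∀ n, ‖lam - ∑ i : Fin n, x i.1‖ ≤ 2 := by
    intro n
    obtain ⟨h1, -, -⟩ := hInv n
    have hp := h1 (fun _ => 1) (fun _ => Or.inl rfl) 1 (Or.inl rfl)
    have hm := h1 (fun _ => 1) (fun _ => Or.inl rfl) (-1) (Or.inr rfl)
    have hq : (0:ℝ) < (2⁻¹:ℝ)^n := by positivity
    set U := ∑ i : Fin n, (fun _ : Fin n => (1:ℝ)) i • x i.1 with hUdef
    set hh := lam - ∑ i : Fin n, x i.1 with hhdef
    have e : hh = (2⁻¹:ℝ) • ((U + (1:ℝ) • hh) - (U + (-1:ℝ) • hh)) := by module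
    rw [e, norm_smul, Real.norm_eq_abs, show |(2⁻¹:ℝ)| = 2⁻¹ by norm_num]
    have hb : ‖(U + (1:ℝ) • hh) - (U + (-1:ℝ) • hh)‖
        ≤ ‖U + (1:ℝ) • hh‖ + ‖U + (-1:ℝ) • hh‖ := norm_sub_le _ _
    linarith
  -- the series is weakly unconditionally Cauchy
  have hwuc : ∀ H : StrongDual ℝ (StrongDual ℝ X), Summable fun j => |H (x j)| := by
    intro H
    refine summable_of_sum_range_le (c := ‖H‖ * 2) (fun n => abs_nonneg _) ?_
    intro n
    rw [← Fin.sum_univ_eq_sum_range (fun j => |H (x j)|) n]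
    set σ : Fin n → ℝ := fun i => if 0 ≤ H (x i.1) then 1 else -1 with hσdef
    have hσv : ∀ i, σ i = 1 ∨ σ i = -1 := fun i => by
      rw [hσdef]; dsimp only; split_ifs <;> simp
    have e : ∀ i : Fin n, |H (x i.1)| = σ i * H (x i.1) := by
      intro i
      rw [hσdef]; dsimp only
      rcases le_or_gt 0 (H (x i.1)) with hc | hc
      · rw [if_pos hc, one_mul, abs_of_nonneg hc]
      · rw [if_neg (not_le.2 hc), abs_of_neg hc]; ring
    rw [Finset.sum_congr rfl (fun i _ => e i)]
    have e2 : ∑ i : Fin n, σ i * H (x i.1) = H (∑ i : Fin n, σ i • x i.1) := by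
      rw [map_sum]
      exact Finset.sum_congr rfl fun i _ => by rw [map_smul, smul_eq_mul]
    rw [e2]
    calc H (∑ i : Fin n, σ i • x i.1) ≤ |H (∑ i : Fin n, σ i • x i.1)| := le_abs_self _
      _ ≤ ‖H‖ * ‖∑ i : Fin n, σ i • x i.1‖ := by
          rw [← Real.norm_eq_abs]; exact H.le_opNorm _
      _ ≤ ‖H‖ * 2 := mul_le_mul_of_nonneg_left (hsign n σ hσv) (norm_nonneg H)
  -- the tails tend to zero pointwise
  have htail0 : ∀ w : X, Filter.Tendsto (fun n => (lam - ∑ i : Fin n, x i.1) w)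
      Filter.atTop (nhds 0) := by
    intro w
    rw [Metric.tendsto_atTop]
    intro δ hδ
    obtain ⟨i₀, hi₀⟩ := hv.exists_dist_lt w (show (0:ℝ) < δ/8 by linarith)
    obtain ⟨N₂, hN₂⟩ := exists_pow_lt_of_lt_one (show (0:ℝ) < δ/4 by linarith)
        (show (2⁻¹:ℝ) < 1 by norm_num)
    refine ⟨max (i₀+1) N₂, fun n hn => ?_⟩
    have hn1 : i₀ < n := lt_of_lt_of_le (Nat.lt_succ_self i₀) (le_trans (le_max_left _ _) hn)
    have hn2 : N₂ ≤ n := le_trans (le_max_right _ _) hn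
    obtain ⟨-, -, h3⟩ := hInv n
    have hval := h3 ⟨i₀, hn1⟩
    have hnorm := htail_norm n
    have hwv : ‖w - v i₀‖ < δ/8 := by rw [← dist_eq_norm]; exact hi₀
    set T := lam - ∑ i : Fin n, x i.1 with hTdef
    have e : T w = T (v i₀) + T (w - v i₀) := by rw [map_sub]; ring
    have b2 : |T (w - v i₀)| ≤ 2 * (δ/8) := by
      calc |T (w - v i₀)| = ‖T (w - v i₀)‖ := (Real.norm_eq_abs _).symm
        _ ≤ ‖T‖ * ‖w - v i₀‖ := T.le_opNorm _
        _ ≤ 2 * (δ/8) := by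
            refine mul_le_mul hnorm (le_of_lt hwv) (norm_nonneg _) (by norm_num)
    have b3 : (2⁻¹:ℝ)^n ≤ (2⁻¹:ℝ)^N₂ :=
      pow_le_pow_of_le_one (by norm_num) (by norm_num) hn2
    rw [Real.dist_eq, sub_zero]
    calc |T w| ≤ |T (v i₀)| + |T (w - v i₀)| := by rw [e]; exact abs_add_le _ _
      _ < δ := by
          have hb1 : |T (v i₀)| ≤ (2⁻¹:ℝ)^n := hval
          linarith
  -- the weak-* sum of the series is lam
  have hhs : ∀ w : X, HasSum (fun j => x j w) (lam w) := by
    intro w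
    have hsummable : Summable (fun j => x j w) := by
      have h6 := hwuc (inclusionInDoubleDual ℝ X w)
      have e : (fun j => |(inclusionInDoubleDual ℝ X w) (x j)|) = fun j => |x j w| := by
        funext j; rw [NormedSpace.dual_def]
      rw [e] at h6
      exact h6.of_abs
    have h1 := hsummable.hasSum
    have h2 := h1.tendsto_sum_nat
    have h3 : Filter.Tendsto (fun n => ∑ i ∈ Finset.range n, x i w)
        Filter.atTop (nhds (lam w)) := by
      have e : ∀ n, ∑ i ∈ Finset.range n, x i w = lam w - (lam - ∑ i : Fin n, x i.1) w := by
        intro n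
        rw [ContinuousLinearMap.sub_apply, ContinuousLinearMap.sum_apply,
          ← Fin.sum_univ_eq_sum_range (fun i => x i w) n]
        ring
      rw [show (fun n => ∑ i ∈ Finset.range n, x i w)
          = fun n => lam w - (lam - ∑ i : Fin n, x i.1) w from funext e]
      have h7 := (htail0 w).const_sub (lam w)
      simpa using h7
    have h8 : ∑' j, x j w = lam w := tendsto_nhds_unique h2 h3
    rwa [h8] at h1
  -- identification of P F with a point of X
  obtain ⟨x₀, hx₀⟩ : ∃ x₀ : X, inclusionInDoubleDual ℝ X x₀ = P F := by
    have h9 : P F ∈ Set.range (inclusionInDoubleDual ℝ X) := by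
      rw [← hrange]; exact ⟨F, rfl⟩
    exact h9
  have hFsplit : ∀ φ : StrongDual ℝ X, F φ = φ x₀ + G φ := by
    intro φ
    have e1 : G φ = F φ - (P F) φ := by rw [hG, ContinuousLinearMap.sub_apply]
    have e2 : (P F) φ = φ x₀ := by rw [← hx₀, NormedSpace.dual_def]
    linarith
  have hGx : ∀ j : ℕ, |G (x j)| ≤ c3 / 2 / 2^j := by
    intro j
    obtain ⟨-, h2, -⟩ := hInv (j+1)
    have h10 := h2 (Fin.last j)
    have e : ((Fin.last j) : ℕ) = j := rfl
    rwa [e] at h10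
  have hsum2 : Summable (fun j => G (x j)) := (hwuc G).of_abs
  have hsum1 : Summable (fun j => x j x₀) := (hhs x₀).summable
  have htsum : ∑' j, F (x j) = lam x₀ + ∑' j, G (x j) := by
    have e : (fun j => F (x j)) = fun j => x j x₀ + G (x j) :=
      funext fun j => hFsplit (x j)
    rw [e, Summable.tsum_add hsum1 hsum2, (hhs x₀).tsum_eq]
  have hGbound : |∑' j, G (x j)| ≤ c3 := by
    have h11 : ‖∑' j, G (x j)‖ ≤ ∑' j, ‖G (x j)‖ := by
      refine norm_tsum_le_tsum_norm ?_
      have e : (fun j => ‖G (x j)‖) = fun j => |G (x j)| := by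
        funext j; rw [Real.norm_eq_abs]
      rw [e]; exact hwuc G
    have h12 : ∑' j, ‖G (x j)‖ ≤ ∑' j, c3 / 2 / 2^j := by
      refine Summable.tsum_le_tsum (fun j => ?_) ?_ (summable_geometric_two' c3)
      · rw [Real.norm_eq_abs]; exact hGx j
      · have e : (fun j => ‖G (x j)‖) = fun j => |G (x j)| := by
          funext j; rw [Real.norm_eq_abs]
        rw [e]; exact hwuc G
    have h13 : ∑' j : ℕ, c3 / 2 / 2^j = c3 := tsum_geometric_two' c3
    rw [Real.norm_eq_abs] at h11
    linarith
  refine ⟨x, lam, hwuc, hhs, hlam1, ?_, ?_⟩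
  · have e1 : F lam = lam x₀ + G lam := hFsplit lam
    rw [e1, htsum]
    have habs := abs_le.1 hGbound
    rw [hc3def] at habs
    have : lam x₀ + G lam - (lam x₀ + ∑' j, G (x j)) = G lam - ∑' j, G (x j) := by ring
    rw [this]
    nlinarith [habs.1, habs.2, hlam2, hd0]
  · have h14 : 0 < 1 - ε := by linarith
    exact mul_pos h14 hd0
end

section
/- Let X be a separable L-embedded Banach space with L-projection P on X** whose range is the canonical image of X, and set X_s = ker P. If x̃_s ∈ X_s is nonzero and attains its norm on X*, i.e. there exists x* ∈ X* with ‖x*‖ = 1 and x̃_s(x*) = ‖x̃_s‖, then there exists a weakly unconditionally Cauchy series ∑ x_j* in X* whose weak-* sum ∑* x_j* has norm 1 and satisfies x̃_s(∑* x_j*) = ‖x̃_s‖ while ∑_j x̃_s(x_j*) = 0. -/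
open NormedSpace

namespace PfAux


variable {Y : Type*} [NormedAddCommGroup Y] [NormedSpace ℝ Y]

/-- `C` "supports" the bidual element `Λ` with margin `δ`. -/
def Margin (δ : ℝ) (Λ : StrongDual ℝ (StrongDual ℝ Y)) (C : Set Y) : Prop :=
  ∀ h : StrongDual ℝ Y, ∀ s : ℝ, (∀ u ∈ C, h u ≤ s) → Λ h + δ * ‖h‖ ≤ s

theorem Margin.nonempty {δ : ℝ} {Λ : StrongDual ℝ (StrongDual ℝ Y)} {C : Set Y}
    (hM : Margin δ Λ C) : C.Nonempty := by
  by_contra hC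
  rw [Set.not_nonempty_iff_eq_empty] at hC
  have := hM 0 (-1) (by simp [hC])
  simp at this
  linarith

theorem margin_univ {δ : ℝ} (hδ : 0 ≤ δ) (Λ : StrongDual ℝ (StrongDual ℝ Y)) :
    Margin δ Λ (Set.univ : Set Y) := by
  intro h s hyp
  by_cases hh : h = 0
  · have h0 : (0:ℝ) ≤ s := by simpa [hh] using hyp 0 (Set.mem_univ _)
    simp [hh]
    linarith
  · exfalso
    have : ∃ w : Y, h w ≠ 0 := by
      by_contra hw
      push_neg at hw
      exact hh (by ext w; simpa using hw w)
    obtain ⟨w, hw⟩ := this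
    have := hyp (((s + 1) / (h w)) • w) (Set.mem_univ _)
    rw [map_smul] at this
    simp only [smul_eq_mul] at this
    rw [div_mul_cancel₀ _ hw] at this
    linarith

theorem margin_ball {δ r : ℝ} (hδ : 0 < δ) {Λ : StrongDual ℝ (StrongDual ℝ Y)} {S : Y}
    (h : ‖Λ - inclusionInDoubleDual ℝ Y S‖ ≤ r) :
    Margin δ Λ (Metric.ball S (r + δ)) := by
  have hr0 : 0 ≤ r := le_trans (ContinuousLinearMap.opNorm_nonneg _) h
  have hρ : 0 < r + δ := by linarith
  intro h' s hyp
  have hS : h' S ≤ s := hyp S (by simp [Metric.mem_ball, hρ])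
  -- key : sup of h' over the open ball
  have key : h' S + (r + δ) * ‖h'‖ ≤ s := by
    by_contra hc
    push_neg at hc
    have hn0 : 0 < ‖h'‖ := by
      rcases (norm_nonneg h').lt_or_eq with h1 | h1
      · exact h1
      · exfalso; rw [← h1] at hc; simp at hc; linarith
    set c' : ℝ := max ((s - h' S) / (r + δ)) 0 with hc'
    have hcc : c' < ‖h'‖ := by
      apply max_lt _ hn0
      rw [div_lt_iff₀ hρ]
      linarith [mul_comm ‖h'‖ (r + δ)]
    -- find x with ‖x‖ ≤ 1 and c' < h' x
    have hx : ∃ x : Y, ‖x‖ ≤ 1 ∧ c' < h' x := by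
      by_contra hx
      push_neg at hx
      have : ‖h'‖ ≤ c' := by
        apply ContinuousLinearMap.opNorm_le_bound' _ (le_max_right _ _)
        intro x hxn
        have h1 : ‖(1 / ‖x‖) • x‖ ≤ 1 := by
          rw [norm_smul]
          simp [abs_of_nonneg (le_of_lt (by positivity : (0:ℝ) < 1/‖x‖))]
          rw [inv_mul_cancel₀ hxn]
        have h2 := hx _ h1
        have h1' : ‖-((1 / ‖x‖) • x)‖ ≤ 1 := by rwa [norm_neg]
        have h3 := hx _ h1'
        rw [map_smul] at h2
        rw [map_neg, map_smul] at h3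
        simp only [smul_eq_mul, one_div] at h2 h3
        have hxpos : 0 < ‖x‖ := lt_of_le_of_ne (norm_nonneg _) (Ne.symm hxn)
        have h2' : h' x ≤ c' * ‖x‖ := by
          have := mul_le_mul_of_nonneg_right h2 (le_of_lt hxpos)
          rwa [mul_comm (‖x‖)⁻¹ _, mul_assoc, inv_mul_cancel₀ hxn, mul_one] at this
        have h3' : -(h' x) ≤ c' * ‖x‖ := by
          have := mul_le_mul_of_nonneg_right h3 (le_of_lt hxpos)
          rwa [neg_mul, mul_comm (‖x‖)⁻¹ _, mul_assoc, inv_mul_cancel₀ hxn, mul_one] at this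
        calc ‖h' x‖ = |h' x| := rfl
          _ ≤ c' * ‖x‖ := abs_le.2 ⟨by linarith, h2'⟩
      linarith
    obtain ⟨x, hx1, hx2⟩ := hx
    have hhx0 : 0 < h' x := lt_of_le_of_lt (le_max_right _ _) hx2
    have hclt : (s - h' S) / (h' x) < r + δ := by
      rw [div_lt_iff₀ hhx0]
      have : (s - h' S) / (r + δ) < h' x := lt_of_le_of_lt (le_max_left _ _) hx2
      rw [div_lt_iff₀ hρ] at this
      nlinarith
    set τ : ℝ := ((s - h' S) / (h' x) + (r + δ)) / 2 with hτ
    have hτ1 : τ < r + δ := by rw [hτ]; linarith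
    have hτ2 : (s - h' S) / (h' x) < τ := by rw [hτ]; linarith
    have hτ0 : 0 ≤ τ := by
      have : 0 ≤ (s - h' S) / (h' x) := div_nonneg (by linarith) (le_of_lt hhx0)
      rw [hτ]; linarith
    have hmem : S + τ • x ∈ Metric.ball S (r + δ) := by
      rw [Metric.mem_ball, dist_eq_norm]
      simp only [add_sub_cancel_left]
      rw [norm_smul, Real.norm_eq_abs, abs_of_nonneg hτ0]
      calc τ * ‖x‖ ≤ τ * 1 := by nlinarith
        _ < r + δ := by linarith
    have := hyp _ hmem
    rw [map_add, map_smul] at this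
    simp only [smul_eq_mul] at this
    rw [div_lt_iff₀ hhx0] at hτ2
    linarith
  have hΛ : Λ h' - h' S ≤ r * ‖h'‖ := by
    have h1 : (Λ - inclusionInDoubleDual ℝ Y S) h' ≤ ‖Λ - inclusionInDoubleDual ℝ Y S‖ * ‖h'‖ := by
      calc (Λ - inclusionInDoubleDual ℝ Y S) h' ≤ ‖(Λ - inclusionInDoubleDual ℝ Y S) h'‖ :=
        le_abs_self _
      _ ≤ ‖Λ - inclusionInDoubleDual ℝ Y S‖ * ‖h'‖ := ContinuousLinearMap.le_opNorm _ _
    have h2 : (Λ - inclusionInDoubleDual ℝ Y S) h' = Λ h' - h' S := by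
      simp [NormedSpace.dual_def]
    rw [h2] at h1
    calc Λ h' - h' S ≤ ‖Λ - inclusionInDoubleDual ℝ Y S‖ * ‖h'‖ := h1
      _ ≤ r * ‖h'‖ := by
        apply mul_le_mul_of_nonneg_right h (norm_nonneg _)
  nlinarith [key, hΛ, norm_nonneg h']


private lemma combo_lt {θ θ' x x' y y' : ℝ} (hθ : 0 ≤ θ) (hθ' : 0 ≤ θ')
    (hsum : θ + θ' = 1) (h1 : x < x') (h2 : y < y') :
    θ * x + θ' * y < θ * x' + θ' * y' := by
  rcases eq_or_lt_of_le hθ with h | h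
  · have : θ' = 1 := by linarith
    simp [← h, this]; linarith
  · have hle : θ' * y ≤ θ' * y' := mul_le_mul_of_nonneg_left (le_of_lt h2) hθ'
    have hlt : θ * x < θ * x' := by exact (mul_lt_mul_iff_right₀ h).2 h1
    linarith

theorem Margin.inter {δ : ℝ} (hδ : 0 < δ) {Λ : StrongDual ℝ (StrongDual ℝ Y)} {A B : Set Y}
    (hAo : IsOpen A) (hAc : Convex ℝ A) (hBc : Convex ℝ B)
    (hA : Margin δ Λ A) (hB : Margin δ Λ B) : Margin δ Λ (A ∩ B) := by
  obtain ⟨a0, ha0⟩ := hA.nonempty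
  obtain ⟨b0, hb0⟩ := hB.nonempty
  -- A ∩ B is nonempty
  have hAB : (A ∩ B).Nonempty := by
    by_contra hE
    rw [Set.not_nonempty_iff_eq_empty] at hE
    have hdisj : Disjoint A B := Set.disjoint_iff_inter_eq_empty.2 hE
    obtain ⟨f, s₀, hfa, hfb⟩ := geometric_hahn_banach_open hAc hAo hBc hdisj
    have h1 : Λ f + δ * ‖f‖ ≤ s₀ := hA f s₀ (fun u hu => le_of_lt (hfa u hu))
    have h2 : Λ (-f) + δ * ‖-f‖ ≤ -s₀ := hB (-f) (-s₀) (by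
      intro u hu
      simp only [ContinuousLinearMap.neg_apply, neg_le_neg_iff]
      exact hfb u hu)
    rw [map_neg, norm_neg] at h2
    have hf0 : ‖f‖ = 0 := by nlinarith [norm_nonneg f]
    have : f = 0 := by rwa [norm_eq_zero] at hf0
    rw [this] at hfa hfb
    have := hfa a0 ha0
    have := hfb b0 hb0
    simp at *
    linarith
  obtain ⟨c0, hc0A, hc0B⟩ := hAB
  intro h s hyp
  -- the auxiliary open convex set in Y × ℝ
  set K : Set (Y × ℝ) := {p | ∃ a ∈ A, a - p.1 ∈ B ∧ p.2 < h a - s} with hK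
  have hKopen : IsOpen K := by
    have : K = ⋃ b ∈ B, (fun p : Y × ℝ => (p.1 + b, p.2)) ⁻¹'
        {q : Y × ℝ | q.1 ∈ A ∧ q.2 < h q.1 - s} := by
      ext p
      simp only [hK, Set.mem_setOf_eq, Set.mem_iUnion, Set.mem_preimage]
      constructor
      · rintro ⟨a, haA, haB, hlt⟩
        exact ⟨a - p.1, haB, by simpa using ⟨haA, hlt⟩⟩
      · rintro ⟨b, hbB, h1, h2⟩
        exact ⟨p.1 + b, h1, by simpa using hbB, h2⟩
    rw [this]
    apply isOpen_biUnion
    intro b _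
    apply IsOpen.preimage
    · exact (continuous_fst.add continuous_const).prodMk continuous_snd
    · apply IsOpen.inter
      · exact hAo.preimage continuous_fst
      · exact isOpen_lt continuous_snd
          (((h.continuous.comp continuous_fst).sub continuous_const))
  have hKconv : Convex ℝ K := by
    rintro p ⟨a, haA, haB, hlt⟩ q ⟨a', ha'A, ha'B, h'lt⟩ θ θ' hθ hθ' hsum
    refine ⟨θ • a + θ' • a', hAc haA ha'A hθ hθ' hsum, ?_, ?_⟩
    · have : θ • a + θ' • a' - (θ • p + θ' • q).1 = θ • (a - p.1) + θ' • (a' - q.1) := by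
        simp [smul_sub]; abel
      rw [this]
      exact hBc haB ha'B hθ hθ' hsum
    · have hexp : h (θ • a + θ' • a') - s = θ * (h a - s) + θ' * (h a' - s) := by
        rw [map_add, map_smul, map_smul]
        simp only [smul_eq_mul]
        linear_combination s * hsum
      rw [hexp]
      exact combo_lt hθ hθ' hsum hlt h'lt
  have hK0 : (0, 0) ∉ K := by
    rintro ⟨a, haA, haB, hlt⟩
    simp only [sub_zero] at haB hlt
    have := hyp a ⟨haA, haB⟩
    linarith
  obtain ⟨f, hf⟩ := geometric_hahn_banach_open_point hKconv hKopen hK0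
  have hf00 : f (0, 0) = 0 := by
    have : ((0 : Y), (0 : ℝ)) = (0 : Y × ℝ) := rfl
    rw [this, map_zero]
  rw [hf00] at hf
  set h₀ : StrongDual ℝ Y := f.comp (ContinuousLinearMap.inl ℝ Y ℝ) with hh₀
  set τ : ℝ := f (0, 1) with hτdef
  have hfsplit : ∀ p : Y × ℝ, f p = h₀ p.1 + p.2 * τ := by
    intro p
    have hp : p = (p.1, 0) + p.2 • ((0 : Y), (1 : ℝ)) := by
      simp [Prod.ext_iff]
    have h1 : h₀ p.1 = f (p.1, 0) := by
      simp [hh₀]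
    calc f p = f ((p.1, 0) + p.2 • ((0 : Y), (1 : ℝ))) := by rw [← hp]
      _ = f (p.1, 0) + p.2 * f (0, 1) := by rw [map_add, map_smul]; simp
      _ = h₀ p.1 + p.2 * τ := by rw [h1, hτdef]
  have hmemK : ∀ a ∈ A, ∀ b ∈ B, ∀ ρ : ℝ, ρ < h a - s → (a - b, ρ) ∈ K := by
    intro a ha b hb ρ hρ
    exact ⟨a, ha, by simpa using hb, hρ⟩
  have hτ0 : 0 ≤ τ := by
    by_contra hτneg
    push_neg at hτneg
    set y := a0 - b0 with hy
    set ρ : ℝ := min (h a0 - s - 1) ((-(h₀ y)) / τ) with hρdef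
    have hmem := hmemK a0 ha0 b0 hb0 ρ (by
      have : ρ ≤ h a0 - s - 1 := min_le_left _ _
      linarith)
    have hval := hf _ hmem
    rw [hfsplit] at hval
    simp only at hval
    have hρ2 : ρ ≤ (-(h₀ y)) / τ := min_le_right _ _
    have hmul : (-(h₀ y)) / τ * τ ≤ ρ * τ :=
      mul_le_mul_of_nonpos_right hρ2 (le_of_lt hτneg)
    rw [div_mul_cancel₀ _ (ne_of_lt hτneg)] at hmul
    linarith
  have hτpos : 0 < τ := by
    rcases eq_or_lt_of_le hτ0 with h1 | h1
    · exfalso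
      have hmem := hmemK c0 hc0A c0 hc0B (h c0 - s - 1) (by linarith)
      have := hf _ hmem
      rw [hfsplit] at this
      simp only [sub_self] at this
      rw [← h1] at this
      simp at this
    · exact h1
  have key2 : ∀ a ∈ A, ∀ b ∈ B, h₀ a - h₀ b + (h a - s) * τ ≤ 0 := by
    intro a ha b hb
    by_contra hc
    push_neg at hc
    set e := h₀ a - h₀ b + (h a - s) * τ with he
    set ρ := (h a - s) - e / (2 * τ) with hρ
    have hρlt : ρ < h a - s := by
      rw [hρ]
      have : 0 < e / (2 * τ) := div_pos hc (by linarith)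
      linarith
    have hmem := hmemK a ha b hb ρ hρlt
    have hval := hf _ hmem
    rw [hfsplit] at hval
    simp only at hval
    rw [map_sub] at hval
    have hcalc : h₀ a - h₀ b + ρ * τ = e - e / 2 := by
      rw [hρ, he]
      field_simp
      ring
    rw [hcalc] at hval
    linarith
  -- apply margins
  have hAineq : ∀ b ∈ B, ∀ a ∈ A, (τ • h + h₀) a ≤ τ * s + h₀ b := by
    intro b hb a ha
    have := key2 a ha b hb
    simp only [ContinuousLinearMap.add_apply, ContinuousLinearMap.coe_smul',
      Pi.smul_apply, smul_eq_mul]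
    nlinarith
  have hmargA : ∀ b ∈ B, Λ (τ • h + h₀) + δ * ‖τ • h + h₀‖ ≤ τ * s + h₀ b := by
    intro b hb
    exact hA _ _ (hAineq b hb)
  have hmargB : Λ (-h₀) + δ * ‖-h₀‖ ≤ τ * s - Λ (τ • h + h₀) - δ * ‖τ • h + h₀‖ := by
    apply hB
    intro b hb
    have := hmargA b hb
    simp only [ContinuousLinearMap.neg_apply]
    linarith
  rw [norm_neg, map_neg] at hmargB
  have hΛsum : Λ (τ • h + h₀) - Λ h₀ = τ * Λ h := by
    rw [← map_sub]
    simp [map_smul]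
  have hnorm : τ * ‖h‖ ≤ ‖τ • h + h₀‖ + ‖h₀‖ := by
    have : ‖(τ • h + h₀) - h₀‖ ≤ ‖τ • h + h₀‖ + ‖h₀‖ := norm_sub_le _ _
    simp only [add_sub_cancel_right] at this
    rw [norm_smul, Real.norm_eq_abs, abs_of_pos hτpos] at this
    exact this
  have h2 : δ * (τ * ‖h‖) ≤ δ * (‖τ • h + h₀‖ + ‖h₀‖) :=
    mul_le_mul_of_nonneg_left hnorm (le_of_lt hδ)
  have h1 : τ * Λ h + δ * (τ * ‖h‖) ≤ τ * s := by linarith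
  have final : τ * (Λ h + δ * ‖h‖) ≤ τ * s := by
    have : τ * (Λ h + δ * ‖h‖) = τ * Λ h + δ * (τ * ‖h‖) := by ring
    linarith
  exact le_of_mul_le_mul_left final hτpos



theorem margin_biInter {δ : ℝ} (hδ : 0 < δ) {Λ : StrongDual ℝ (StrongDual ℝ Y)} {ι : Type*}
    (t : Finset ι) (C : ι → Set Y) (hCo : ∀ i, IsOpen (C i)) (hCc : ∀ i, Convex ℝ (C i))
    (hM : ∀ i, Margin δ Λ (C i)) : Margin δ Λ (⋂ i ∈ t, C i) := by
  classical
  induction t using Finset.induction_on with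
  | empty => simpa using margin_univ (le_of_lt hδ) Λ
  | insert a t hni ih =>
    rw [Finset.set_biInter_insert]
    exact Margin.inter hδ (hCo a) (hCc a) (convex_iInter₂ (fun i _ => hCc i)) (hM a) ih

/-- Helly-type lemma: an element of the bidual can be "realized" in the space,
with finitely many exact linear constraints and finitely many ball constraints. -/
theorem helly {Λ : StrongDual ℝ (StrongDual ℝ Y)} {ι κ : Type*} [Fintype ι] [Fintype κ]
    (S : ι → Y) (r : ι → ℝ) (hr : ∀ i, ‖Λ - inclusionInDoubleDual ℝ Y (S i)‖ ≤ r i)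
    (g : κ → StrongDual ℝ Y) {ε : ℝ} (hε : 0 < ε) :
    ∃ u : Y, (∀ j, g j u = Λ (g j)) ∧ ∀ i, ‖u - S i‖ ≤ r i + ε := by
  classical
  -- the continuous linear map into the finite-dimensional space of constraints
  set q : Y →L[ℝ] (κ → ℝ) := ContinuousLinearMap.pi g with hq
  set c : κ → ℝ := fun j => Λ (g j) with hc
  set R : Submodule ℝ (κ → ℝ) := LinearMap.range (q : Y →ₗ[ℝ] (κ → ℝ)) with hR
  haveI : FiniteDimensional ℝ (κ → ℝ) := by infer_instance
  -- bounded right inverse on R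
  have hM : ∃ M : ℝ, 0 < M ∧ ∀ y ∈ R, ∃ z : Y, q z = y ∧ ‖z‖ ≤ M * ‖y‖ := by
    obtain ⟨d, ⟨bR⟩⟩ := Module.Basis.exists_basis ℝ R
    haveI : Fintype d := FiniteDimensional.fintypeBasisIndex bR
    have hpre : ∀ l : d, ∃ z : Y, q z = (bR l : κ → ℝ) := by
      intro l
      obtain ⟨z, hz⟩ := (bR l).2
      exact ⟨z, hz⟩
    choose zv hzv using hpre
    set coord : d → (R →ₗ[ℝ] ℝ) := fun l => (Finsupp.lapply l).comp (bR.repr.toLinearMap)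
      with hcoord
    have hcont : ∀ l : d, ∃ Cl : ℝ, 0 ≤ Cl ∧ ∀ y : R, |coord l y| ≤ Cl * ‖y‖ := by
      intro l
      set cl : R →L[ℝ] ℝ := LinearMap.toContinuousLinearMap (coord l) with hcl
      refine ⟨‖cl‖, ContinuousLinearMap.opNorm_nonneg cl, fun y => ?_⟩
      have := cl.le_opNorm y
      simpa [hcl, Real.norm_eq_abs] using this
    choose Cl hCl0 hCl using hcont
    have hsumnn : 0 ≤ ∑ l, Cl l * ‖zv l‖ :=
      Finset.sum_nonneg (fun l _ => mul_nonneg (hCl0 l) (norm_nonneg _))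
    refine ⟨∑ l, Cl l * ‖zv l‖ + 1, by linarith, ?_⟩
    intro y hy
    set yR : R := ⟨y, hy⟩ with hyR
    refine ⟨∑ l, coord l yR • zv l, ?_, ?_⟩
    · rw [map_sum]
      have : ∀ l, q (coord l yR • zv l) = coord l yR • (bR l : κ → ℝ) := by
        intro l
        rw [map_smul, hzv]
      rw [Finset.sum_congr rfl (fun l _ => this l)]
      have hyrepr : ∑ l, coord l yR • (bR l) = yR := by
        simp only [hcoord, LinearMap.comp_apply, Finsupp.lapply_apply,
          LinearEquiv.coe_toLinearMap]
        exact bR.sum_repr yR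
      calc ∑ l, coord l yR • (bR l : κ → ℝ) = ((∑ l, coord l yR • (bR l) : R) : κ → ℝ) := by
            push_cast [Submodule.coe_sum]
            rfl
        _ = y := by rw [hyrepr]
    · have hnorm : ∀ l, ‖coord l yR • zv l‖ ≤ (Cl l * ‖zv l‖) * ‖y‖ := by
        intro l
        rw [norm_smul, Real.norm_eq_abs]
        have h1 := hCl l yR
        have h2 : ‖yR‖ = ‖y‖ := rfl
        rw [h2] at h1
        have := mul_le_mul_of_nonneg_right h1 (norm_nonneg (zv l))
        calc |coord l yR| * ‖zv l‖ ≤ Cl l * ‖y‖ * ‖zv l‖ := this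
          _ = (Cl l * ‖zv l‖) * ‖y‖ := by ring
      calc ‖∑ l, coord l yR • zv l‖ ≤ ∑ l, ‖coord l yR • zv l‖ := norm_sum_le _ _
        _ ≤ ∑ l, (Cl l * ‖zv l‖) * ‖y‖ := Finset.sum_le_sum (fun l _ => hnorm l)
        _ = (∑ l, Cl l * ‖zv l‖) * ‖y‖ := by rw [← Finset.sum_mul]
        _ ≤ (∑ l, Cl l * ‖zv l‖ + 1) * ‖y‖ := by
            apply mul_le_mul_of_nonneg_right _ (norm_nonneg _)
            linarith
  obtain ⟨M, hMpos, hMinv⟩ := hM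
  set δ : ℝ := ε / 2 with hδdef
  have hδ : 0 < δ := by positivity
  set K : Set Y := ⋂ i ∈ (Finset.univ : Finset ι), Metric.ball (S i) (r i + δ) with hKdef
  have hKmargin : Margin δ Λ K :=
    margin_biInter hδ _ _ (fun i => Metric.isOpen_ball) (fun i => convex_ball _ _)
      (fun i => margin_ball hδ (hr i))
  have hKconv : Convex ℝ K := convex_iInter₂ (fun i _ => convex_ball _ _)
  -- c is in the closure of q '' K
  have hclose : ∀ η : ℝ, 0 < η → ∃ u' ∈ K, ‖q u' - c‖ < η := by
    intro η hη
    by_contra hno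
    push_neg at hno
    have hcQ : c ∉ closure (q '' K) := by
      intro hmem
      rw [Metric.mem_closure_iff] at hmem
      obtain ⟨y, hy, hdy⟩ := hmem (η/2) (by positivity)
      obtain ⟨u', hu', rfl⟩ := hy
      have := hno u' hu'
      rw [dist_comm, dist_eq_norm] at hdy
      linarith
    have hQconv : Convex ℝ (closure (q '' K)) :=
      (hKconv.linear_image (q : Y →ₗ[ℝ] (κ → ℝ))).closure
    obtain ⟨f, s₀, hfa, hfc⟩ :=
      geometric_hahn_banach_closed_point hQconv isClosed_closure hcQ
    -- transfer f to a functional on Y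
    set h : StrongDual ℝ Y := f.comp q with hhdef
    have hhyp : ∀ u ∈ K, h u ≤ s₀ := by
      intro u hu
      have : q u ∈ closure (q '' K) := subset_closure ⟨u, hu, rfl⟩
      exact le_of_lt (hfa _ this)
    set e : κ → (κ → ℝ) := fun j j' => if j = j' then (1:ℝ) else 0 with he
    have hrep : ∀ y : κ → ℝ, y = ∑ j, y j • e j := fun y => pi_eq_sum_univ y
    have hΛh : Λ h = f c := by
      have hdec : h = ∑ j, f (e j) • g j := by
        ext u
        rw [hhdef]
        simp only [ContinuousLinearMap.comp_apply]
        conv_lhs => rw [hrep (q u)]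
        rw [map_sum, ContinuousLinearMap.sum_apply]
        refine Finset.sum_congr rfl (fun j _ => ?_)
        rw [map_smul]
        have hquj : q u j = g j u := rfl
        simp only [ContinuousLinearMap.coe_smul', Pi.smul_apply, smul_eq_mul, hquj]
        ring
      rw [hdec, map_sum]
      conv_rhs => rw [hrep c]
      rw [map_sum]
      refine Finset.sum_congr rfl (fun j _ => ?_)
      rw [map_smul, map_smul]
      simp only [smul_eq_mul, hc]
      ring
    have := hKmargin h s₀ hhyp
    rw [hΛh] at this
    have hnn : 0 ≤ δ * ‖h‖ := mul_nonneg hδ.le (norm_nonneg h)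
    linarith
  -- now pick the approximation and correct it
  obtain ⟨u', hu'K, hu'c⟩ := hclose (δ / M) (by positivity)
  have hcR : c - q u' ∈ R := by
    -- c ∈ R since it is a limit of elements of R
    have hcinR : c ∈ R := by
      have hRclosed : IsClosed (R : Set (κ → ℝ)) := Submodule.closed_of_finiteDimensional R
      have hcc : c ∈ closure (R : Set (κ → ℝ)) := by
        rw [Metric.mem_closure_iff]
        intro η hη
        obtain ⟨u'', hu'', hq''⟩ := hclose η hη
        refine ⟨q u'', ?_, by rwa [dist_eq_norm, norm_sub_rev]⟩
        exact LinearMap.mem_range_self _ u''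
      rw [hRclosed.closure_eq] at hcc
      exact hcc
    exact Submodule.sub_mem R hcinR (LinearMap.mem_range_self _ u')
  obtain ⟨z, hz, hznorm⟩ := hMinv _ hcR
  refine ⟨u' + z, ?_, ?_⟩
  · intro j
    have : q (u' + z) = c := by
      rw [map_add, hz]
      abel
    have := congrFun this j
    simpa [hq, hc] using this
  · intro i
    have hu'ball : u' ∈ Metric.ball (S i) (r i + δ) := by
      have := Set.mem_iInter₂.1 hu'K i (Finset.mem_univ i)
      exact this
    rw [Metric.mem_ball, dist_eq_norm] at hu'ball
    have hzb : ‖z‖ ≤ δ := by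
      have h1 : ‖c - q u'‖ ≤ δ / M := by
        rw [norm_sub_rev]
        linarith
      calc ‖z‖ ≤ M * ‖c - q u'‖ := hznorm
        _ ≤ M * (δ / M) := mul_le_mul_of_nonneg_left h1 (le_of_lt hMpos)
        _ = δ := by field_simp
    have habel : u' + z - S i = (u' - S i) + z := by abel
    calc ‖u' + z - S i‖ = ‖(u' - S i) + z‖ := by rw [habel]
      _ ≤ ‖u' - S i‖ + ‖z‖ := norm_add_le _ _
      _ ≤ (r i + δ) + δ := by linarith
      _ = r i + ε := by rw [hδdef]; ring



/-- Alternating sum over a finite set of indices: the largest index gets `+`,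
and signs alternate downwards. -/
noncomputable def altSum (l : ℕ → Y) (F : Finset ℕ) : Y :=
  ∑ k ∈ F, ((-1:ℝ)^((F.filter (fun j => k < j)).card)) • l k

@[simp] lemma altSum_empty (l : ℕ → Y) : altSum l ∅ = 0 := by simp [altSum]

lemma altSum_insert (l : ℕ → Y) (F : Finset ℕ) (n : ℕ) (hF : ∀ k ∈ F, k < n) :
    altSum l (insert n F) = l n - altSum l F := by
  classical
  have hn : n ∉ F := fun h => lt_irrefl n (hF n h)
  rw [altSum, Finset.sum_insert hn]
  have h1 : ((insert n F).filter (fun j => n < j)).card = 0 := by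
    rw [Finset.card_eq_zero, Finset.filter_eq_empty_iff]
    intro j hj
    rcases Finset.mem_insert.1 hj with h | h
    · simp [h]
    · have := hF j h; omega
  have h2 : ∀ k ∈ F, ((insert n F).filter (fun j => k < j)).card
      = (F.filter (fun j => k < j)).card + 1 := by
    intro k hk
    have hkn : k < n := hF k hk
    rw [Finset.filter_insert, if_pos hkn, Finset.card_insert_of_notMem]
    intro hmem
    exact hn (Finset.mem_of_mem_filter _ hmem)
  rw [h1]
  simp only [pow_zero, one_smul]
  have h3 : ∀ k ∈ F, ((-1:ℝ)^(((insert n F).filter (fun j => k < j)).card)) • l k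
      = -(((-1:ℝ)^((F.filter (fun j => k < j)).card)) • l k) := by
    intro k hk
    rw [h2 k hk, pow_succ, mul_smul]
    rw [neg_one_smul, smul_neg]
  rw [Finset.sum_congr rfl h3, Finset.sum_neg_distrib, altSum, sub_eq_add_neg]

lemma altSum_singleton (l : ℕ → Y) (n : ℕ) : altSum l {n} = l n := by
  have : ({n} : Finset ℕ) = insert n ∅ := rfl
  rw [this, altSum_insert l ∅ n (by simp), altSum_empty, sub_zero]



theorem step_exists {X : Type*} [NormedAddCommGroup X] [NormedSpace ℝ X]
    (P : StrongDual ℝ (StrongDual ℝ X) →L[ℝ] StrongDual ℝ (StrongDual ℝ X))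
    (hproj : ∀ F, P (P F) = P F)
    (hrange : Set.range P = Set.range (inclusionInDoubleDual ℝ X))
    (hL : ∀ F : StrongDual ℝ (StrongDual ℝ X), ‖P F‖ + ‖F - P F‖ = ‖F‖)
    (xs : StrongDual ℝ (StrongDual ℝ X)) (hxs_ker : P xs = 0)
    (d : ℕ → X) (n : ℕ) (l : ℕ → StrongDual ℝ X)
    (hxsl : xs (l n) = ‖xs‖)
    (hS : ∀ F ∈ (Finset.range (n+1)).powerset, ‖altSum l F‖ ≤ (3:ℝ)/2 - (1/2)^(n+1)) :
    ∃ u : StrongDual ℝ X, xs u = ‖xs‖ ∧ (∀ i < n+1, u (d i) = 0) ∧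
      (∀ F ∈ (Finset.range (n+1)).powerset, ‖u - altSum l F‖ ≤ (3:ℝ)/2 - (1/2)^(n+2)) := by
  classical
  set D : ℝ := (3:ℝ)/2 - (1/2)^(n+1) with hD
  have hD0 : 0 ≤ D := by
    rw [hD]
    have h1 : ((1:ℝ)/2)^(n+1) ≤ 1 := by
      apply pow_le_one₀ <;> norm_num
    linarith
  have hPfix : ∀ x : X, P (inclusionInDoubleDual ℝ X x) = inclusionInDoubleDual ℝ X x := by
    intro x
    have hx : inclusionInDoubleDual ℝ X x ∈ Set.range P := by
      rw [hrange]; exact Set.mem_range_self x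
    obtain ⟨G, hG⟩ := hx
    rw [← hG, hproj]
  set Λ :=
    (inclusionInDoubleDual ℝ (StrongDual ℝ X) (l n)) -
      (inclusionInDoubleDual ℝ (StrongDual ℝ X) (l n)).comp P with hΛdef
  have hΛ : ∀ G : StrongDual ℝ (StrongDual ℝ X), Λ G = (G - P G) (l n) := by
    intro G
    rw [hΛdef]
    simp [NormedSpace.dual_def]
  -- distance of the alternating sums to l n
  have hlt : ∀ F ∈ (Finset.range (n+1)).powerset, ‖altSum l F - l n‖ ≤ D := by
    intro F hF
    rw [Finset.mem_powerset] at hF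
    by_cases hn : n ∈ F
    · have hsub : ∀ k ∈ F.erase n, k < n := by
        intro k hk
        have h1 := Finset.mem_of_mem_erase hk
        have h2 := Finset.ne_of_mem_erase hk
        have := hF h1
        rw [Finset.mem_range] at this
        omega
      have : altSum l F = l n - altSum l (F.erase n) := by
        conv_lhs => rw [← Finset.insert_erase hn]
        exact altSum_insert l (F.erase n) n hsub
      rw [this]
      have h4 : l n - altSum l (F.erase n) - l n = -(altSum l (F.erase n)) := by abel
      rw [h4, norm_neg]
      exact hS _ (Finset.mem_powerset.2 (Finset.Subset.trans (Finset.erase_subset _ _) hF))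
    · have hsub : ∀ k ∈ F, k < n := by
        intro k hk
        have := hF hk
        rw [Finset.mem_range] at this
        have : k ≠ n := fun h => hn (h ▸ hk)
        omega
      have : altSum l (insert n F) = l n - altSum l F := altSum_insert l F n hsub
      have h4 : altSum l F - l n = -(altSum l (insert n F)) := by rw [this]; abel
      rw [h4, norm_neg]
      apply hS
      rw [Finset.mem_powerset, Finset.insert_subset_iff]
      exact ⟨Finset.mem_range.2 (by omega), hF⟩
  -- radii bounds
  have hr : ∀ F : {F : Finset ℕ // F ∈ (Finset.range (n+1)).powerset},
      ‖Λ - inclusionInDoubleDual ℝ (StrongDual ℝ X) (altSum l F.1)‖ ≤ D := by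
    intro F
    apply ContinuousLinearMap.opNorm_le_bound _ hD0
    intro G
    set SF := altSum l F.1 with hSF
    have h1 : (Λ - inclusionInDoubleDual ℝ (StrongDual ℝ X) SF) G
        = -((P G) SF) - (G - P G) (SF - l n) := by
      simp only [ContinuousLinearMap.sub_apply, NormedSpace.dual_def, hΛ, map_sub]
      ring
    rw [h1]
    have h2 : ‖-((P G) SF) - (G - P G) (SF - l n)‖
        ≤ ‖P G‖ * ‖SF‖ + ‖G - P G‖ * ‖SF - l n‖ := by
      calc ‖-((P G) SF) - (G - P G) (SF - l n)‖
          ≤ ‖-((P G) SF)‖ + ‖(G - P G) (SF - l n)‖ := norm_sub_le _ _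
        _ = ‖(P G) SF‖ + ‖(G - P G) (SF - l n)‖ := by rw [norm_neg]
        _ ≤ ‖P G‖ * ‖SF‖ + ‖G - P G‖ * ‖SF - l n‖ := by
            exact add_le_add (ContinuousLinearMap.le_opNorm _ _)
              (ContinuousLinearMap.le_opNorm _ _)
    have h3 : ‖SF‖ ≤ D := hS _ F.2
    have h4 : ‖SF - l n‖ ≤ D := hlt _ F.2
    calc ‖-((P G) SF) - (G - P G) (SF - l n)‖
        ≤ ‖P G‖ * ‖SF‖ + ‖G - P G‖ * ‖SF - l n‖ := h2
      _ ≤ ‖P G‖ * D + ‖G - P G‖ * D := by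
          exact add_le_add (mul_le_mul_of_nonneg_left h3 (ContinuousLinearMap.opNorm_nonneg _))
            (mul_le_mul_of_nonneg_left h4 (ContinuousLinearMap.opNorm_nonneg _))
      _ = D * (‖P G‖ + ‖G - P G‖) := by ring
      _ = D * ‖G‖ := by rw [hL]
  -- the constraints
  set gc : Option (Fin (n+1)) → StrongDual ℝ (StrongDual ℝ X) := fun j =>
    match j with
    | none => xs
    | some i => inclusionInDoubleDual ℝ X (d i) with hgc
  have hε : (0:ℝ) < (1/2)^(n+2) := by positivity
  obtain ⟨u, hu1, hu2⟩ := helly (Λ := Λ)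
    (S := fun F : {F : Finset ℕ // F ∈ (Finset.range (n+1)).powerset} => altSum l F.1)
    (r := fun _ => D) hr gc hε
  refine ⟨u, ?_, ?_, ?_⟩
  · have := hu1 none
    simp only [hgc] at this
    rw [this, hΛ, hxs_ker, ContinuousLinearMap.sub_apply, ContinuousLinearMap.zero_apply, sub_zero, hxsl]
  · intro i hi
    have := hu1 (some ⟨i, hi⟩)
    simp only [hgc] at this
    rw [NormedSpace.dual_def] at this
    rw [this, hΛ, hPfix]
    simp
  · intro F hF
    have := hu2 ⟨F, hF⟩
    have harith : D + (1/2)^(n+2) = (3:ℝ)/2 - (1/2)^(n+2) := by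
      rw [hD]
      have : ((1:ℝ)/2)^(n+1) = 2 * (1/2)^(n+2) := by
        rw [pow_succ]
        ring
      rw [this]
      ring
    rw [harith] at this
    exact this


lemma altSum_congr (l l' : ℕ → Y) (F : Finset ℕ) (h : ∀ k ∈ F, l k = l' k) :
    altSum l F = altSum l' F :=
  Finset.sum_congr rfl (fun k hk => by rw [h k hk])

/-- The invariant carried along the construction. -/
def Good {X : Type*} [NormedAddCommGroup X] [NormedSpace ℝ X]
    (xs : StrongDual ℝ (StrongDual ℝ X)) (x' : StrongDual ℝ X) (d : ℕ → X)
    (l : ℕ → StrongDual ℝ X) (n : ℕ) : Prop :=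
  l 0 = x' ∧ (∀ j ≤ n, xs (l j) = ‖xs‖) ∧ (∀ j ≤ n, ∀ i < j, l j (d i) = 0) ∧
    ∀ F ∈ (Finset.range (n+1)).powerset, ‖altSum l F‖ ≤ (3:ℝ)/2 - (1/2)^(n+1)

lemma good_step {X : Type*} [NormedAddCommGroup X] [NormedSpace ℝ X]
    (P : StrongDual ℝ (StrongDual ℝ X) →L[ℝ] StrongDual ℝ (StrongDual ℝ X))
    (hproj : ∀ F, P (P F) = P F)
    (hrange : Set.range P = Set.range (inclusionInDoubleDual ℝ X))
    (hL : ∀ F : StrongDual ℝ (StrongDual ℝ X), ‖P F‖ + ‖F - P F‖ = ‖F‖)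
    (xs : StrongDual ℝ (StrongDual ℝ X)) (hxs_ker : P xs = 0)
    (x' : StrongDual ℝ X) (d : ℕ → X) (n : ℕ) (l : ℕ → StrongDual ℝ X)
    (hG : Good xs x' d l n) :
    ∃ l' : ℕ → StrongDual ℝ X, (∀ m, m ≠ n+1 → l' m = l m) ∧ Good xs x' d l' (n+1) := by
  classical
  obtain ⟨h0, h1, h2, h3⟩ := hG
  obtain ⟨u, hu1, hu2, hu3⟩ := step_exists P hproj hrange hL xs hxs_ker d n l
    (h1 n le_rfl) h3
  set l' : ℕ → StrongDual ℝ X := fun m => if m = n+1 then u else l m with hl'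
  have hagree : ∀ m, m ≠ n+1 → l' m = l m := by
    intro m hm
    simp [hl', hm]
  have hl'top : l' (n+1) = u := by simp [hl']
  refine ⟨l', hagree, ?_, ?_, ?_, ?_⟩
  · rw [hagree 0 (by omega)]; exact h0
  · intro j hj
    by_cases hje : j = n+1
    · subst hje; rw [hl'top]; exact hu1
    · rw [hagree j hje]; exact h1 j (by omega)
  · intro j hj i hi
    by_cases hje : j = n+1
    · subst hje; rw [hl'top]; exact hu2 i hi
    · rw [hagree j hje]; exact h2 j (by omega) i hi
  · intro F hF
    rw [Finset.mem_powerset] at hF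
    by_cases hn : n+1 ∈ F
    · have hsub : ∀ k ∈ F.erase (n+1), k < n+1 := by
        intro k hk
        have hk1 := Finset.mem_of_mem_erase hk
        have hk2 := Finset.ne_of_mem_erase hk
        have := hF hk1
        rw [Finset.mem_range] at this
        omega
      have heq : altSum l' F = l' (n+1) - altSum l' (F.erase (n+1)) := by
        conv_lhs => rw [← Finset.insert_erase hn]
        exact altSum_insert l' (F.erase (n+1)) (n+1) hsub
      have heq2 : altSum l' (F.erase (n+1)) = altSum l (F.erase (n+1)) := by
        apply altSum_congr
        intro k hk
        exact hagree k (by have := hsub k hk; omega)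
      rw [heq, heq2, hl'top]
      apply hu3
      rw [Finset.mem_powerset]
      intro k hk
      rw [Finset.mem_range]
      have := hsub k hk
      omega
    · have heq : altSum l' F = altSum l F := by
        apply altSum_congr
        intro k hk
        exact hagree k (fun h => hn (h ▸ hk))
      rw [heq]
      have hb : ‖altSum l F‖ ≤ (3:ℝ)/2 - (1/2)^(n+1) := by
        apply h3
        rw [Finset.mem_powerset]
        intro k hk
        have := hF hk
        rw [Finset.mem_range] at this ⊢
        have : k ≠ n+1 := fun h => hn (h ▸ hk)
        omega
      have hmono : ((1:ℝ)/2)^(n+2) ≤ (1/2)^(n+1) := by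
        apply pow_le_pow_of_le_one <;> norm_num
      linarith

end PfAux

set_option maxHeartbeats 1000000

/-- For a separable L-embedded Banach space `X` with L-projection `P` and
`X_s = ker P`: if `x̃ₛ ∈ X_s` is nonzero and attains its norm on some norm-one
`x* ∈ X*`, then there is a weakly unconditionally Cauchy series `∑ xⱼ*` in `X*`
whose weak-* sum `g` has norm one with `x̃ₛ(g) = ‖x̃ₛ‖` while `∑ x̃ₛ(xⱼ*) = 0`. -/
theorem separable_LEmbedded_norm_attaining_singular
    (X : Type*) [NormedAddCommGroup X] [NormedSpace ℝ X] [CompleteSpace X]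
    [TopologicalSpace.SeparableSpace X]
    (P : StrongDual ℝ (StrongDual ℝ X) →L[ℝ] StrongDual ℝ (StrongDual ℝ X))
    (hproj : ∀ F, P (P F) = P F)
    (hrange : Set.range P = Set.range (inclusionInDoubleDual ℝ X))
    (hL : ∀ F : StrongDual ℝ (StrongDual ℝ X), ‖P F‖ + ‖F - P F‖ = ‖F‖)
    (xs : StrongDual ℝ (StrongDual ℝ X)) (hxs_ker : P xs = 0) (hxs_ne : xs ≠ 0)
    (x' : StrongDual ℝ X) (hx'_norm : ‖x'‖ = 1) (hattain : xs x' = ‖xs‖) :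
    ∃ (x : ℕ → StrongDual ℝ X) (g : StrongDual ℝ X),
      (∀ G : StrongDual ℝ (StrongDual ℝ X), Summable fun j => |G (x j)|) ∧
      (∀ v : X, HasSum (fun j => (x j) v) (g v)) ∧
      ‖g‖ = 1 ∧ xs g = ‖xs‖ ∧ (∑' j, xs (x j)) = 0 := by
  classical
  haveI : Nonempty X := ⟨0⟩
  obtain ⟨d, hd⟩ := TopologicalSpace.exists_dense_seq X
  -- base of the recursion
  have hbase : PfAux.Good xs x' d (fun _ => x') 0 := by
    refine ⟨rfl, ?_, ?_, ?_⟩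
    · intro j _; exact hattain
    · intro j hj i hi; omega
    · intro F hF
      rw [Finset.mem_powerset] at hF
      have hF' : F ⊆ {0} := by simpa using hF
      rcases Finset.subset_singleton_iff.1 hF' with h | h
      · subst h
        simp [PfAux.altSum_empty]
        norm_num
      · subst h
        rw [PfAux.altSum_singleton]
        rw [hx'_norm]
        norm_num
  -- the recursive construction
  have hstep := fun n (l : ℕ → StrongDual ℝ X) (hG : PfAux.Good xs x' d l n) =>
    PfAux.good_step P hproj hrange hL xs hxs_ker x' d n l hG
  choose next hnext1 hnext2 using hstep
  let f : ∀ n : ℕ, {l : ℕ → StrongDual ℝ X // PfAux.Good xs x' d l n} := fun n =>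
    Nat.rec ⟨fun _ => x', hbase⟩ (fun n ih => ⟨next n ih.1 ih.2, hnext2 n ih.1 ih.2⟩) n
  have hfsucc : ∀ n, (f (n+1)).1 = next n (f n).1 (f n).2 := fun n => rfl
  set u : ℕ → StrongDual ℝ X := fun n => (f n).1 n with hudef
  have stab : ∀ n m, m ≤ n → (f n).1 m = u m := by
    intro n
    induction n with
    | zero =>
      intro m hm
      have : m = 0 := by omega
      subst this; rfl
    | succ n ih =>
      intro m hm
      rcases Nat.lt_or_ge m (n+1) with h | h
      · have h1 : (f (n+1)).1 m = (f n).1 m := by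
          rw [hfsucc]
          exact hnext1 n (f n).1 (f n).2 m (by omega)
        rw [h1, ih m (by omega)]
      · have : m = n+1 := by omega
        subst this; rfl
  have hu0 : u 0 = x' := (f 0).2.1
  have hxs_u : ∀ n, xs (u n) = ‖xs‖ := fun n => (f n).2.2.1 n le_rfl
  have hvan : ∀ j, ∀ i < j, u j (d i) = 0 := fun j i hi => (f j).2.2.2.1 j le_rfl i hi
  have haltbound : ∀ F : Finset ℕ, ‖PfAux.altSum u F‖ ≤ 3/2 := by
    intro F
    set n := F.sup id with hn
    have h1 : PfAux.altSum u F = PfAux.altSum (f n).1 F := by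
      apply PfAux.altSum_congr
      intro k hk
      exact (stab n k (Finset.le_sup (f := id) hk)).symm
    rw [h1]
    have h2 : F ∈ (Finset.range (n+1)).powerset := by
      rw [Finset.mem_powerset]
      intro k hk
      rw [Finset.mem_range]
      have := Finset.le_sup (f := id) hk
      simp only [id] at this
      omega
    have h3 := (f n).2.2.2.2 F h2
    have h4 : (0:ℝ) < (1/2)^(n+1) := by positivity
    linarith
  have hubound : ∀ n, ‖u n‖ ≤ 3/2 := by
    intro n
    have := haltbound {n}
    rwa [PfAux.altSum_singleton] at this
  -- the series
  set xseq : ℕ → StrongDual ℝ X := fun j => u j - u (j+1) with hxseq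
  -- signed partial sums are bounded
  have keyV : ∀ (η : ℕ → ℝ), (∀ j, η j = 1 ∨ η j = -1) → ∀ N, 1 ≤ N →
      ∃ F : Finset ℕ, F ⊆ Finset.Ico 1 N ∧
        (∑ j ∈ Finset.range N, η j • (u j - u (j+1)))
          = η (N-1) • (PfAux.altSum u (insert 0 F) + PfAux.altSum u F) - η (N-1) • u N := by
    intro η hη N
    induction N with
    | zero => intro h; exact absurd h (by norm_num)
    | succ N ih =>
      intro _
      by_cases hN0 : N = 0
      · subst hN0
        refine ⟨∅, by simp, ?_⟩
        have h1 : (insert 0 ∅ : Finset ℕ) = {0} := by simp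
        rw [Finset.sum_range_one, h1, PfAux.altSum_singleton, PfAux.altSum_empty, add_zero,
          smul_sub]
      · have hN1 : 1 ≤ N := by omega
        obtain ⟨F, hFsub, hFeq⟩ := ih hN1
        have hidx : N + 1 - 1 = N := by omega
        rw [Finset.sum_range_succ, hFeq, hidx]
        by_cases hsame : η N = η (N-1)
        · refine ⟨F, hFsub.trans (Finset.Ico_subset_Ico le_rfl (by omega)), ?_⟩
          rw [← hsame, smul_sub]
          abel
        · have hflip : η N = -η (N-1) := by
            rcases hη N with h1 | h1 <;> rcases hη (N-1) with h2 | h2 <;>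
              rw [h1, h2] at hsame ⊢ <;> first | (exfalso; exact hsame rfl) | norm_num
          refine ⟨insert N F, ?_, ?_⟩
          · intro k hk
            rcases Finset.mem_insert.1 hk with h | h
            · subst h; rw [Finset.mem_Ico]; omega
            · have := Finset.mem_Ico.1 (hFsub h)
              rw [Finset.mem_Ico]; omega
          · have hFlt : ∀ k ∈ F, k < N := fun k hk => (Finset.mem_Ico.1 (hFsub hk)).2
            have h0lt : ∀ k ∈ insert 0 F, k < N := by
              intro k hk
              rcases Finset.mem_insert.1 hk with h | h
              · omega
              · exact hFlt k h
            have hA' : PfAux.altSum u (insert 0 (insert N F)) = u N - PfAux.altSum u (insert 0 F) := by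
              rw [Finset.insert_comm]
              exact PfAux.altSum_insert u (insert 0 F) N h0lt
            have hB' : PfAux.altSum u (insert N F) = u N - PfAux.altSum u F :=
              PfAux.altSum_insert u F N hFlt
            rw [hA', hB', hflip]
            set A := PfAux.altSum u (insert 0 F)
            set B := PfAux.altSum u F
            simp only [neg_smul, smul_sub, smul_add]
            module
  have hsigned : ∀ (η : ℕ → ℝ), (∀ j, η j = 1 ∨ η j = -1) → ∀ N,
      ‖∑ j ∈ Finset.range N, η j • (u j - u (j+1))‖ ≤ 9/2 := by
    intro η hη N
    rcases Nat.eq_zero_or_pos N with h | h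
    · subst h; simp; norm_num
    · obtain ⟨F, _, heq⟩ := keyV η hη N h
      rw [heq]
      have habs : |η (N-1)| = 1 := by
        rcases hη (N-1) with h1 | h1 <;> rw [h1] <;> norm_num
      calc ‖η (N-1) • (PfAux.altSum u (insert 0 F) + PfAux.altSum u F) - η (N-1) • u N‖
          ≤ ‖η (N-1) • (PfAux.altSum u (insert 0 F) + PfAux.altSum u F)‖
            + ‖η (N-1) • u N‖ := norm_sub_le _ _
        _ = |η (N-1)| * ‖PfAux.altSum u (insert 0 F) + PfAux.altSum u F‖
            + |η (N-1)| * ‖u N‖ := by rw [norm_smul, norm_smul, Real.norm_eq_abs]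
        _ = ‖PfAux.altSum u (insert 0 F) + PfAux.altSum u F‖ + ‖u N‖ := by
            rw [habs, one_mul, one_mul]
        _ ≤ (‖PfAux.altSum u (insert 0 F)‖ + ‖PfAux.altSum u F‖) + ‖u N‖ := by
            have := norm_add_le (PfAux.altSum u (insert 0 F)) (PfAux.altSum u F)
            linarith
        _ ≤ (3/2 + 3/2) + 3/2 := by
            have h1 := haltbound (insert 0 F)
            have h2 := haltbound F
            have h3 := hubound N
            linarith
        _ = 9/2 := by norm_num
  -- weak unconditional Cauchyness
  have hwuC : ∀ G : StrongDual ℝ (StrongDual ℝ X), Summable fun j => |G (xseq j)| := by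
    intro G
    apply summable_of_sum_range_le (c := ‖G‖ * (9/2)) (fun n => abs_nonneg _)
    intro N
    set η : ℕ → ℝ := fun j => if G (xseq j) < 0 then -1 else 1 with hηdef
    have hη : ∀ j, η j = 1 ∨ η j = -1 := by
      intro j
      by_cases h : G (xseq j) < 0 <;> simp [hηdef, h]
    have habs : ∀ j, |G (xseq j)| = η j * G (xseq j) := by
      intro j
      by_cases h : G (xseq j) < 0
      · rw [abs_of_neg h]; simp [hηdef, h]
      · rw [abs_of_nonneg (by linarith [not_lt.1 h])]; simp [hηdef, h]
    calc ∑ j ∈ Finset.range N, |G (xseq j)|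
        = ∑ j ∈ Finset.range N, η j * G (xseq j) :=
          Finset.sum_congr rfl (fun j _ => habs j)
      _ = G (∑ j ∈ Finset.range N, η j • xseq j) := by
          rw [map_sum]
          refine Finset.sum_congr rfl (fun j _ => ?_)
          rw [map_smul]; rfl
      _ ≤ |G (∑ j ∈ Finset.range N, η j • xseq j)| := le_abs_self _
      _ ≤ ‖G‖ * ‖∑ j ∈ Finset.range N, η j • xseq j‖ := G.le_opNorm _
      _ ≤ ‖G‖ * (9/2) := by
          apply mul_le_mul_of_nonneg_left _ (norm_nonneg G)
          exact hsigned η hη N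
  -- pointwise convergence of u to 0
  have hulim : ∀ v : X, Filter.Tendsto (fun N => u N v) Filter.atTop (nhds 0) := by
    intro v
    rw [Metric.tendsto_atTop]
    intro ε hε
    obtain ⟨i₀, hi₀⟩ := hd.exists_dist_lt v (by positivity : (0:ℝ) < ε/2)
    refine ⟨i₀ + 1, fun N hN => ?_⟩
    have hvan' : u N (d i₀) = 0 := hvan N i₀ (by omega)
    have h1 : u N v = u N (v - d i₀) := by rw [map_sub, hvan', sub_zero]
    rw [Real.dist_eq, sub_zero, h1]
    have h2 : |u N (v - d i₀)| ≤ ‖u N‖ * ‖v - d i₀‖ := (u N).le_opNorm _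
    have h3 : ‖v - d i₀‖ < ε/2 := by rwa [dist_eq_norm] at hi₀
    have h4 : ‖u N‖ * ‖v - d i₀‖ ≤ (3/2) * ‖v - d i₀‖ :=
      mul_le_mul_of_nonneg_right (hubound N) (norm_nonneg _)
    calc |u N (v - d i₀)| ≤ ‖u N‖ * ‖v - d i₀‖ := h2
      _ ≤ (3/2) * ‖v - d i₀‖ := h4
      _ < ε := by
          have := mul_lt_mul_of_pos_left h3 (by norm_num : (0:ℝ) < 3/2)
          linarith
  refine ⟨xseq, x', hwuC, ?_, hx'_norm, hattain, ?_⟩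
  · intro v
    have hsummable : Summable (fun j => xseq j v) := by
      apply Summable.of_norm
      have := hwuC (inclusionInDoubleDual ℝ X v)
      simpa [Real.norm_eq_abs, NormedSpace.dual_def] using this
    have htel : ∀ N, ∑ j ∈ Finset.range N, xseq j v = u 0 v - u N v := by
      intro N
      have : ∀ j, xseq j v = u j v - u (j+1) v := by
        intro j; rw [hxseq]; rfl
      rw [Finset.sum_congr rfl (fun j _ => this j)]
      exact Finset.sum_range_sub' (fun j => u j v) N
    have hlim : Filter.Tendsto (fun N => ∑ j ∈ Finset.range N, xseq j v)
        Filter.atTop (nhds (x' v)) := by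
      have h1 : Filter.Tendsto (fun N => u 0 v - u N v) Filter.atTop (nhds (u 0 v - 0)) :=
        Filter.Tendsto.sub tendsto_const_nhds (hulim v)
      rw [sub_zero, hu0] at h1
      exact (Filter.tendsto_congr (fun N => (htel N).symm)).1 h1
    have h2 := hsummable.hasSum.tendsto_sum_nat
    have h3 : ∑' j, xseq j v = x' v := tendsto_nhds_unique h2 hlim
    rw [← h3]
    exact hsummable.hasSum
  · have hzero : (fun j => xs (xseq j)) = fun _ => (0:ℝ) := by
      funext j
      show xs (u j - u (j+1)) = 0
      rw [map_sub, hxs_u, hxs_u, sub_self]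
    rw [hzero]
    exact tsum_zero
end

section
/- Let z₀ : [0,1] → ℝ be defined by z₀(t) = 1 if t is rational and z₀(t) = −1 if t is irrational. Then for every continuous function z : [0,1] → ℝ one has sup_{t ∈ [0,1]} |z(t) + z₀(t)| = (sup_{t ∈ [0,1]} |z(t)|) + 1; that is, in the supremum norm the distance exhibits the ℓ¹-additivity ‖z + z₀‖_∞ = ‖z‖_∞ + ‖z₀‖_∞. -/
open scoped Classical

/-- The ±1-valued function on `[0,1]` which is `1` at rationals and `-1` at
irrationals is L-direct to `C([0,1])` in the sup norm:
`‖z + z₀‖_∞ = ‖z‖_∞ + 1` for every continuous `z : [0,1] → ℝ`. -/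
theorem sup_dist_rational_indicator (z : C(Set.Icc (0:ℝ) 1, ℝ)) :
    (⨆ t : Set.Icc (0:ℝ) 1,
        |z t + (if (t : ℝ) ∈ Set.range ((↑) : ℚ → ℝ) then (1:ℝ) else -1)|)
      = (⨆ t : Set.Icc (0:ℝ) 1, |z t|) + 1 := by
  haveI : Nonempty (Set.Icc (0:ℝ) 1) := ⟨⟨0, by norm_num⟩⟩
  set f : Set.Icc (0:ℝ) 1 → ℝ := fun t =>
    |z t + (if (t : ℝ) ∈ Set.range ((↑) : ℚ → ℝ) then (1:ℝ) else -1)| with hf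
  obtain ⟨t₀, -, ht₀⟩ := isCompact_univ.exists_isMaxOn Set.univ_nonempty
    ((continuous_abs.comp z.continuous).continuousOn)
  have hmax : ∀ t : Set.Icc (0:ℝ) 1, |z t| ≤ |z t₀| := fun t => ht₀ (Set.mem_univ t)
  have hbdd : BddAbove (Set.range fun t : Set.Icc (0:ℝ) 1 => |z t|) :=
    ⟨|z t₀|, by rintro y ⟨t, rfl⟩; exact hmax t⟩
  have hM : (⨆ t : Set.Icc (0:ℝ) 1, |z t|) = |z t₀| :=
    le_antisymm (ciSup_le hmax) (le_ciSup hbdd t₀)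
  have hfle : ∀ t : Set.Icc (0:ℝ) 1, f t ≤ |z t₀| + 1 := by
    intro t
    have h1 : |(if (t : ℝ) ∈ Set.range ((↑) : ℚ → ℝ) then (1:ℝ) else -1)| = 1 := by
      split_ifs <;> norm_num
    calc f t ≤ |z t| + |(if (t : ℝ) ∈ Set.range ((↑) : ℚ → ℝ) then (1:ℝ) else -1)| :=
          abs_add_le _ _
      _ ≤ |z t₀| + 1 := by rw [h1]; exact add_le_add_left (hmax t) 1
  have hfbdd : BddAbove (Set.range f) := ⟨|z t₀| + 1, by rintro y ⟨t, rfl⟩; exact hfle t⟩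
  rw [hM]
  refine le_antisymm (ciSup_le hfle) ?_
  refine le_of_forall_pos_le_add ?_
  intro ε hε
  obtain ⟨δ, hδ, hδ'⟩ := Metric.continuous_iff.mp z.continuous t₀ ε hε
  -- find a point t near t₀ in (0,1) of the right arithmetic nature
  have ht₀mem := t₀.2
  have hab : max ((t₀ : ℝ) - δ) 0 < min ((t₀ : ℝ) + δ) 1 := by
    rcases ht₀mem with ⟨h0, h1⟩
    simp only [max_lt_iff, lt_min_iff]
    refine ⟨⟨by linarith, by linarith⟩, ⟨by linarith, by norm_num⟩⟩
  have key : ∀ x : ℝ, max ((t₀ : ℝ) - δ) 0 < x → x < min ((t₀ : ℝ) + δ) 1 →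
      x ∈ Set.Icc (0:ℝ) 1 ∧ ∀ hx : x ∈ Set.Icc (0:ℝ) 1, dist (z ⟨x, hx⟩) (z t₀) < ε := by
    intro x hx1 hx2
    have h0 : (0:ℝ) ≤ x := le_of_lt (lt_of_le_of_lt (le_max_right _ _) hx1)
    have h1 : x ≤ 1 := le_of_lt (lt_of_lt_of_le hx2 (min_le_right _ _))
    have hd : dist x (t₀ : ℝ) < δ := by
      have := lt_of_le_of_lt (le_max_left _ _) hx1
      have := lt_of_lt_of_le hx2 (min_le_left _ _)
      rw [Real.dist_eq, abs_lt]; constructor <;> linarith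
    refine ⟨⟨h0, h1⟩, fun hx => hδ' ⟨x, hx⟩ ?_⟩
    simpa [Subtype.dist_eq] using hd
  rcases le_or_gt 0 (z t₀) with hz | hz
  · -- pick a rational point
    obtain ⟨q, hq1, hq2⟩ := exists_rat_btwn hab
    obtain ⟨hmem, hdist⟩ := key q hq1 hq2
    set t : Set.Icc (0:ℝ) 1 := ⟨(q : ℝ), hmem⟩
    have hzt : z t₀ - ε < z t := by
      have := hdist hmem
      rw [Real.dist_eq, abs_lt] at this
      linarith [this.1, this.2]
    have hft : |z t₀| + 1 - ε ≤ f t := by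
      have hrat : ((t : ℝ)) ∈ Set.range ((↑) : ℚ → ℝ) := ⟨q, rfl⟩
      rw [hf]
      simp only [if_pos hrat]
      rw [abs_of_nonneg hz]
      calc z t₀ + 1 - ε ≤ z t + 1 := by linarith
        _ ≤ |z t + 1| := le_abs_self _
    have := le_ciSup hfbdd t
    linarith
  · -- pick an irrational point
    obtain ⟨x, hxirr, hx1, hx2⟩ := exists_irrational_btwn hab
    obtain ⟨hmem, hdist⟩ := key x hx1 hx2
    set t : Set.Icc (0:ℝ) 1 := ⟨x, hmem⟩
    have hzt : z t < z t₀ + ε := by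
      have := hdist hmem
      rw [Real.dist_eq, abs_lt] at this
      linarith [this.1, this.2]
    have hft : |z t₀| + 1 - ε ≤ f t := by
      have hirr : ((t : ℝ)) ∉ Set.range ((↑) : ℚ → ℝ) := hxirr
      rw [hf]
      simp only [if_neg hirr]
      rw [abs_of_neg hz]
      calc -z t₀ + 1 - ε ≤ -(z t + -1) := by linarith
        _ ≤ |z t + -1| := neg_le_abs _
    have := le_ciSup hfbdd t
    linarith
end
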